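/- The function H(M) = Σ over complete flags A_1 ⊂ A_2 ⊂ ... ⊂ A_n = [n] (with |A_i| = i) of the tuple ((A_1, r_M(A_1)), ..., (A_n, r_M(A_n))), valued in the free abelian group generated by such tuples, is a valuation under matroid subdivisions. -/

import Mathlib

open Finset
open scoped Pointwise

/-- The indicator vector `e_B ∈ ℝⁿ` of a subset `B ⊆ [n]`. -/
def indVec (n : ℕ) (B : Finset (Fin n)) : Fin n → ℝ := fun i => if i ∈ B then 1 else 0

/-- A collection of subsets of `[n]` is the collection of bases of a matroid
(possibly the empty matroid) iff it satisfies the basis exchange axiom. -/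
def IsBases {n : ℕ} (𝓑 : Finset (Finset (Fin n))) : Prop :=
  ∀ B₁ ∈ 𝓑, ∀ B₂ ∈ 𝓑, ∀ b₁ ∈ B₁ \ B₂, ∃ b₂ ∈ B₂ \ B₁, insert b₂ (B₁.erase b₁) ∈ 𝓑

/-- The matroid (basis) polytope: convex hull of indicator vectors of the bases. -/
def polytope {n : ℕ} (𝓑 : Finset (Finset (Fin n))) : Set (Fin n → ℝ) :=
  convexHull ℝ (indVec n '' ↑𝓑)

/-- The rank of a subset `A` in the matroid with bases `𝓑`:
the maximal size of an intersection of `A` with a basis. -/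
def mrank {n : ℕ} (𝓑 : Finset (Finset (Fin n))) (A : Finset (Fin n)) : ℕ :=
  𝓑.sup fun B => (A ∩ B).card

/-- A subdivision of a polytope `P` into polytopes `Ps i`: their union is `P`,
their vertices are vertices of `P`, and each pairwise intersection is a proper
(exposed) face of both pieces. -/
def IsSubdivision {n m : ℕ} (P : Set (Fin n → ℝ)) (Ps : Fin m → Set (Fin n → ℝ)) : Prop :=
  (⋃ i, Ps i) = P ∧
  (∀ i, Set.extremePoints ℝ (Ps i) ⊆ Set.extremePoints ℝ P) ∧
  ∀ i j, i ≠ j →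
    IsExposed ℝ (Ps i) (Ps i ∩ Ps j) ∧ IsExposed ℝ (Ps j) (Ps i ∩ Ps j) ∧
    Ps i ∩ Ps j ≠ Ps i ∧ Ps i ∩ Ps j ≠ Ps j

/-- A matroid subdivision of the matroid `𝓑` into the matroids `𝓜 i`. -/
def IsMatroidSubdivision {n m : ℕ} (𝓑 : Finset (Finset (Fin n)))
    (𝓜 : Fin m → Finset (Finset (Fin n))) : Prop :=
  IsBases 𝓑 ∧ (∀ i, IsBases (𝓜 i)) ∧ IsSubdivision (polytope 𝓑) fun i => polytope (𝓜 i)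

open Classical in
/-- For `A ⊆ [m]`, the matroid `M_A` whose polytope is `⋂_{a ∈ A} Q(M_a)`:
its bases are the bases of `M` whose indicator vector lies in every `Q(M_a)`, `a ∈ A`.
For `A = ∅` this is `M` itself. -/
noncomputable def interMatroid {n m : ℕ} (𝓑 : Finset (Finset (Fin n)))
    (𝓜 : Fin m → Finset (Finset (Fin n))) (A : Finset (Fin m)) : Finset (Finset (Fin n)) :=
  𝓑.filter fun B => ∀ a ∈ A, indVec n B ∈ polytope (𝓜 a)

/-- `f` is a valuation under matroid subdivisions:
`∑_{A ⊆ [m]} (-1)^{|A|} f(M_A) = 0` for every matroid subdivision. -/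
def IsValuation {n : ℕ} {G : Type*} [AddCommGroup G] (f : Finset (Finset (Fin n)) → G) : Prop :=
  ∀ (m : ℕ) (𝓑 : Finset (Finset (Fin n))) (𝓜 : Fin m → Finset (Finset (Fin n))),
    IsMatroidSubdivision 𝓑 𝓜 →
    ∑ A : Finset (Fin m), (-1 : ℤ) ^ A.card • f (interMatroid 𝓑 𝓜 A) = 0

open Classical in
/-- `H(M) = ∑ ((A_1, r_M(A_1)), …, (A_n, r_M(A_n)))`, summed over all maximal flags
`A_1 ⊂ ⋯ ⊂ A_n` of subsets of `[n]` with `|A_i| = i`, with `H(∅) = 0`. -/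
noncomputable def flagH {n : ℕ} (𝓑 : Finset (Finset (Fin n))) :
    FreeAbelianGroup (Fin n → Finset (Fin n) × ℕ) :=
  if 𝓑 = ∅ then 0 else
    ∑ C ∈ Finset.univ.filter fun C : Fin n → Finset (Fin n) =>
        (∀ i, (C i).card = (i : ℕ) + 1) ∧ ∀ i j, i ≤ j → C i ⊆ C j,
      FreeAbelianGroup.of fun i => (C i, mrank 𝓑 (C i))

namespace Proof19


variable {n m : ℕ}

lemma sum_range_two_pow (N : ℕ) : ∑ k ∈ range N, 2 ^ k = 2 ^ N - 1 := by
  induction N with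
  | zero => simp
  | succ N ih =>
    rw [Finset.sum_range_succ, ih]
    have h1 : 1 ≤ 2 ^ N := Nat.one_le_two_pow
    have : 2 ^ (N + 1) = 2 ^ N + 2 ^ N := by ring
    omega

lemma sum_two_pow_lt {N : ℕ} {U : Finset ℕ} (hU : U ⊆ range N) :
    ∑ k ∈ U, 2 ^ k < 2 ^ N := by
  calc ∑ k ∈ U, 2 ^ k ≤ ∑ k ∈ range N, 2 ^ k := Finset.sum_le_sum_of_subset hU
  _ = 2 ^ N - 1 := sum_range_two_pow N
  _ < 2 ^ N := by have : 1 ≤ 2 ^ N := Nat.one_le_two_pow; omega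

lemma sum_two_pow_inj : ∀ (N : ℕ) (S T : Finset ℕ), S ⊆ range N → T ⊆ range N →
    ∑ k ∈ S, 2 ^ k = ∑ k ∈ T, 2 ^ k → S = T := by
  intro N
  induction N with
  | zero =>
    intro S T hS hT _
    simp only [range_zero, Finset.subset_empty] at hS hT
    rw [hS, hT]
  | succ N ih =>
    intro S T hS hT h
    have hsub : ∀ U : Finset ℕ, U ⊆ range (N + 1) → N ∉ U → U ⊆ range N := by
      intro U hU hN k hk
      have := hU hk
      rw [Finset.mem_range] at this ⊢
      rcases Nat.lt_succ_iff_lt_or_eq.mp this with h' | rfl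
      · exact h'
      · exact absurd hk hN
    by_cases hNS : N ∈ S <;> by_cases hNT : N ∈ T
    · have hS' : S.erase N ⊆ range N := hsub _ (fun k hk => hS (Finset.erase_subset _ _ hk))
        (Finset.notMem_erase _ _)
      have hT' : T.erase N ⊆ range N := hsub _ (fun k hk => hT (Finset.erase_subset _ _ hk))
        (Finset.notMem_erase _ _)
      have hS2 : 2 ^ N + ∑ k ∈ S.erase N, 2 ^ k = ∑ k ∈ S, 2 ^ k := by
        simpa using Finset.add_sum_erase _ (fun k => 2 ^ k) hNS
      have hT2 : 2 ^ N + ∑ k ∈ T.erase N, 2 ^ k = ∑ k ∈ T, 2 ^ k := by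
        simpa using Finset.add_sum_erase _ (fun k => 2 ^ k) hNT
      have : S.erase N = T.erase N := ih _ _ hS' hT' (by omega)
      have h1 : S = insert N (S.erase N) := (Finset.insert_erase hNS).symm
      have h2 : T = insert N (T.erase N) := (Finset.insert_erase hNT).symm
      rw [h1, h2, this]
    · exfalso
      have h1 : 2 ^ N ≤ ∑ k ∈ S, 2 ^ k := Finset.single_le_sum (fun k _ => Nat.zero_le _) hNS
      have h2 := sum_two_pow_lt (hsub T hT hNT)
      omega
    · exfalso
      have h1 : 2 ^ N ≤ ∑ k ∈ T, 2 ^ k := Finset.single_le_sum (fun k _ => Nat.zero_le _) hNT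
      have h2 := sum_two_pow_lt (hsub S hS hNS)
      omega
    · exact ih _ _ (hsub S hS hNS) (hsub T hT hNT) h

lemma indVec_injective : Function.Injective (indVec n) := by
  intro B₁ B₂ h
  ext e
  have he := congrFun h e
  simp only [indVec] at he
  by_cases h1 : e ∈ B₁ <;> by_cases h2 : e ∈ B₂ <;> simp [h1, h2] at he <;> tauto

lemma polytope_subset_cube (𝓝 : Finset (Finset (Fin n))) :
    polytope 𝓝 ⊆ {x | ∀ i, x i ∈ Set.Icc (0:ℝ) 1} := by
  apply convexHull_min
  · rintro x ⟨B, _, rfl⟩ i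
    by_cases h : i ∈ B <;> simp [indVec, h]
  · intro x hx y hy a b ha hb hab i
    have h1 := hx i
    have h2 := hy i
    simp only [Set.mem_Icc, Set.mem_setOf_eq] at h1 h2 ⊢
    simp only [Pi.add_apply, Pi.smul_apply, smul_eq_mul]
    constructor
    · have := mul_nonneg ha h1.1
      have := mul_nonneg hb h2.1
      linarith
    · have := mul_le_mul_of_nonneg_left h1.2 ha
      have := mul_le_mul_of_nonneg_left h2.2 hb
      linarith

lemma indVec_mem_polytope {𝓝 : Finset (Finset (Fin n))} {B : Finset (Fin n)} (hB : B ∈ 𝓝) :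
    indVec n B ∈ polytope 𝓝 :=
  subset_convexHull ℝ _ ⟨B, by simpa using hB, rfl⟩

lemma aux01 {a b u v t : ℝ} (ha : 0 < a) (hb : 0 < b) (hab : a + b = 1)
    (hu0 : 0 ≤ u) (hu1 : u ≤ 1) (hv0 : 0 ≤ v) (hv1 : v ≤ 1)
    (heq : a * u + b * v = t) : (t = 1 → u = 1) ∧ (t = 0 → u = 0) := by
  constructor
  · intro ht
    have hbv : b * v ≤ b := by nlinarith
    have hau : a * 1 ≤ a * u := by rw [mul_one]; linarith
    have := (mul_le_mul_iff_right₀ ha).mp hau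
    linarith
  · intro ht
    have h1 : 0 ≤ a * u := mul_nonneg ha.le hu0
    have h2 : 0 ≤ b * v := mul_nonneg hb.le hv0
    have h3 : a * u = 0 := by linarith
    rcases mul_eq_zero.mp h3 with h | h
    · exact absurd h ha.ne'
    · exact h

lemma indVec_extreme_of_mem {𝓝 : Finset (Finset (Fin n))} {B : Finset (Fin n)}
    (h : indVec n B ∈ polytope 𝓝) :
    indVec n B ∈ Set.extremePoints ℝ (polytope 𝓝) := by
  refine ⟨h, ?_⟩
  intro x₁ hx₁ x₂ hx₂ hseg
  obtain ⟨a, b, ha, hb, hab, heq⟩ := hseg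
  have key : ∀ i, x₁ i = indVec n B i ∧ x₂ i = indVec n B i := by
    intro i
    have h1 := polytope_subset_cube 𝓝 hx₁ i
    have h2 := polytope_subset_cube 𝓝 hx₂ i
    simp only [Set.mem_Icc] at h1 h2
    have heqi : a * x₁ i + b * x₂ i = indVec n B i := by
      have := congrFun heq i
      simpa using this
    have heqi' : b * x₂ i + a * x₁ i = indVec n B i := by linarith
    have K1 := aux01 ha hb hab h1.1 h1.2 h2.1 h2.2 heqi
    have K2 := aux01 hb ha (by linarith) h2.1 h2.2 h1.1 h1.2 heqi'
    by_cases hi : i ∈ B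
    · have : indVec n B i = 1 := by simp [indVec, hi]
      rw [this]
      exact ⟨K1.1 this, K2.1 this⟩
    · have : indVec n B i = 0 := by simp [indVec, hi]
      rw [this]
      exact ⟨K1.2 this, K2.2 this⟩
  ext i; exact (key i).1

lemma mem_polytope_iff {𝓝 : Finset (Finset (Fin n))} {B : Finset (Fin n)} :
    indVec n B ∈ polytope 𝓝 ↔ B ∈ 𝓝 := by
  constructor
  · intro h
    obtain ⟨B', hB', hBB⟩ := extremePoints_convexHull_subset (indVec_extreme_of_mem h)
    have := indVec_injective hBB
    rw [← this]
    simpa using hB'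
  · exact indVec_mem_polytope

lemma le_max_on_polytope {𝓝 : Finset (Finset (Fin n))} (f : (Fin n → ℝ) →ₗ[ℝ] ℝ) {M : ℝ}
    (hM : ∀ B ∈ 𝓝, f (indVec n B) ≤ M) : ∀ x ∈ polytope 𝓝, f x ≤ M := by
  intro x hx
  have : polytope 𝓝 ⊆ {y | f y ≤ M} := by
    apply convexHull_min
    · rintro y ⟨B, hB, rfl⟩
      exact hM B (by simpa using hB)
    · exact convex_halfSpace_le f.isLinear M
  exact this hx

lemma extreme_vertex_mem {K F : Set (Fin n → ℝ)} (hK : Convex ℝ K) (hKF : IsExtreme ℝ K F)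
    {ι : Type*} [DecidableEq ι] {s : Finset ι} {w : ι → ℝ} {y : ι → Fin n → ℝ}
    (hw0 : ∀ j ∈ s, 0 ≤ w j) (hw1 : ∑ j ∈ s, w j = 1) (hy : ∀ j ∈ s, y j ∈ K)
    (hx : ∑ j ∈ s, w j • y j ∈ F) {i : ι} (hi : i ∈ s) (hwi : 0 < w i) : y i ∈ F := by
  have hsum_erase : ∑ j ∈ s.erase i, w j = 1 - w i := by
    have := Finset.add_sum_erase s w hi
    linarith
  by_cases h1 : w i = 1
  · have hz : ∀ j ∈ s.erase i, w j = 0 := by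
      intro j hj
      have hnn : ∀ j ∈ s.erase i, 0 ≤ w j := fun j hj => hw0 j (Finset.mem_of_mem_erase hj)
      have : ∑ j ∈ s.erase i, w j = 0 := by rw [hsum_erase, h1]; ring
      exact (Finset.sum_eq_zero_iff_of_nonneg hnn).mp this j hj
    have heq : ∑ j ∈ s, w j • y j = y i := by
      rw [← Finset.add_sum_erase s _ hi, h1, one_smul]
      have h0 : ∑ j ∈ s.erase i, w j • y j = 0 := by
        apply Finset.sum_eq_zero
        intro j hj
        rw [hz j hj, zero_smul]
      rw [h0, add_zero]
    rwa [heq] at hx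
  · have hwi1 : w i < 1 := by
      have hle : w i ≤ 1 := by
        rw [← hw1]
        exact Finset.single_le_sum hw0 hi
      exact lt_of_le_of_ne hle h1
    set c : ℝ := 1 - w i with hc
    have hc0 : 0 < c := by simp only [hc]; linarith
    set z : Fin n → ℝ := c⁻¹ • ∑ j ∈ s.erase i, w j • y j with hzdef
    have hzK : z ∈ K := by
      have h2 : ∑ j ∈ s.erase i, (w j / c) • y j ∈ K :=
        hK.sum_mem (fun j hj => div_nonneg (hw0 j (Finset.mem_of_mem_erase hj)) hc0.le)
          (by rw [← Finset.sum_div, hsum_erase]; exact div_self hc0.ne')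
          (fun j hj => hy j (Finset.mem_of_mem_erase hj))
      have h3 : z = ∑ j ∈ s.erase i, (w j / c) • y j := by
        rw [hzdef, Finset.smul_sum]
        exact Finset.sum_congr rfl fun j _ => by rw [smul_smul, div_eq_inv_mul]
      rwa [h3]
    have hseg : ∑ j ∈ s, w j • y j ∈ openSegment ℝ (y i) z := by
      refine ⟨w i, c, hwi, hc0, by simp only [hc]; ring, ?_⟩
      rw [hzdef, smul_inv_smul₀ hc0.ne']
      exact Finset.add_sum_erase s (fun j => w j • y j) hi
    exact hKF.2 (hy i hi) hzK hx hseg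





variable {n : ℕ}

/-! ### Matroid exchange combinatorics -/

noncomputable def wsum (ω : Fin n → ℝ) (B : Finset (Fin n)) : ℝ := ∑ e ∈ B, ω e

lemma equicard {M : Finset (Finset (Fin n))} (hM : IsBases M) :
    ∀ B₁ ∈ M, ∀ B₂ ∈ M, B₁.card = B₂.card := by
  suffices H : ∀ k, ∀ B₁ ∈ M, ∀ B₂ ∈ M, (B₁ \ B₂).card = k → B₁.card = B₂.card by
    intro B₁ h₁ B₂ h₂; exact H _ B₁ h₁ B₂ h₂ rfl
  intro k
  induction k with
  | zero =>
    intro B₁ h₁ B₂ h₂ h0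
    have hsub : B₁ ⊆ B₂ := Finset.sdiff_eq_empty_iff_subset.mp (Finset.card_eq_zero.mp h0)
    rcases (B₂ \ B₁).eq_empty_or_nonempty with he | ⟨b₁, hb₁⟩
    · rw [Finset.Subset.antisymm hsub (Finset.sdiff_eq_empty_iff_subset.mp he)]
    · obtain ⟨b₂, hb₂, _⟩ := hM B₂ h₂ B₁ h₁ b₁ hb₁
      rw [Finset.card_eq_zero.mp h0] at hb₂
      exact absurd hb₂ (Finset.notMem_empty _)
  | succ k ih =>
    intro B₁ h₁ B₂ h₂ hk
    have hne : (B₁ \ B₂).Nonempty := by rw [← Finset.card_pos, hk]; omega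
    obtain ⟨b₁, hb₁⟩ := hne
    obtain ⟨b₂, hb₂, hmem⟩ := hM B₁ h₁ B₂ h₂ b₁ hb₁
    obtain ⟨hb₂1, hb₂2⟩ := Finset.mem_sdiff.mp hb₂
    obtain ⟨hb₁1, hb₁2⟩ := Finset.mem_sdiff.mp hb₁
    have hcard : (insert b₂ (B₁.erase b₁)).card = B₁.card := by
      rw [Finset.card_insert_of_notMem (fun hmem' => hb₂2 (Finset.mem_of_mem_erase hmem')),
          Finset.card_erase_of_mem hb₁1]
      have : 1 ≤ B₁.card := Finset.card_pos.mpr ⟨b₁, hb₁1⟩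
      omega
    have hdiff : (insert b₂ (B₁.erase b₁)) \ B₂ = (B₁ \ B₂).erase b₁ := by
      ext x
      simp only [Finset.mem_sdiff, Finset.mem_erase, Finset.mem_insert]
      constructor
      · rintro ⟨h | ⟨hx1, hx2⟩, hnB₂⟩
        · exact absurd (h ▸ hb₂1) hnB₂
        · exact ⟨hx1, hx2, hnB₂⟩
      · rintro ⟨hx1, hx2, hx3⟩
        exact ⟨Or.inr ⟨hx1, hx2⟩, hx3⟩
    have hdcard : ((insert b₂ (B₁.erase b₁)) \ B₂).card = k := by
      rw [hdiff, Finset.card_erase_of_mem hb₁, hk]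
      omega
    have := ih _ hmem B₂ h₂ hdcard
    omega

lemma estar {M : Finset (Finset (Fin n))} (hM : IsBases M) {ω : Fin n → ℝ}
    {B : Finset (Fin n)} (hB : B ∈ M)
    (hmax : ∀ B' ∈ M, wsum ω B' ≤ wsum ω B) {S : Finset (Fin n)}
    (hS : ∀ e ∈ S, ∀ e', ω e ≤ ω e' → e' ∈ S) :
    ∀ B' ∈ M, (S ∩ B').card ≤ (S ∩ B).card := by
  by_contra hcon
  push_neg at hcon
  obtain ⟨B₁, hB₁, hgt⟩ := hcon
  classical
  set bad := M.filter (fun B' => (S ∩ B).card < (S ∩ B').card) with hbad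
  have hbadne : bad.Nonempty := ⟨B₁, Finset.mem_filter.mpr ⟨hB₁, hgt⟩⟩
  obtain ⟨B', hB'bad, hB'max⟩ := Finset.exists_max_image bad (fun B' => (B ∩ B').card) hbadne
  have hB'M : B' ∈ M := (Finset.mem_filter.mp hB'bad).1
  have hB'gt : (S ∩ B).card < (S ∩ B').card := (Finset.mem_filter.mp hB'bad).2
  have step1 : B' \ B ⊆ S := by
    intro b₁ hb₁
    by_contra hb₁S
    obtain ⟨b₂, hb₂, hmem⟩ := hM B' hB'M B hB b₁ hb₁
    obtain ⟨hb₂B, hb₂B'⟩ := Finset.mem_sdiff.mp hb₂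
    obtain ⟨hb₁B', hb₁B⟩ := Finset.mem_sdiff.mp hb₁
    have hcard1 : (S ∩ B').card ≤ (S ∩ insert b₂ (B'.erase b₁)).card := by
      apply Finset.card_le_card
      intro x hx
      obtain ⟨hxS, hxB'⟩ := Finset.mem_inter.mp hx
      exact Finset.mem_inter.mpr ⟨hxS, Finset.mem_insert_of_mem
        (Finset.mem_erase.mpr ⟨fun h => hb₁S (h ▸ hxS), hxB'⟩)⟩
    have hbad'' : insert b₂ (B'.erase b₁) ∈ bad :=
      Finset.mem_filter.mpr ⟨hmem, lt_of_lt_of_le hB'gt hcard1⟩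
    have hsub : B ∩ B' ⊆ B ∩ insert b₂ (B'.erase b₁) := by
      intro x hx
      obtain ⟨hxB, hxB'⟩ := Finset.mem_inter.mp hx
      exact Finset.mem_inter.mpr ⟨hxB, Finset.mem_insert_of_mem
        (Finset.mem_erase.mpr ⟨fun h => hb₁B (h ▸ hxB), hxB'⟩)⟩
    have hcard2 : (B ∩ B').card < (B ∩ insert b₂ (B'.erase b₁)).card := by
      apply Finset.card_lt_card
      rw [Finset.ssubset_iff_of_subset hsub]
      refine ⟨b₂, Finset.mem_inter.mpr ⟨hb₂B, Finset.mem_insert_self _ _⟩, ?_⟩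
      intro hcon2
      exact hb₂B' (Finset.mem_inter.mp hcon2).2
    exact absurd (hB'max _ hbad'') (not_le.mpr hcard2)
  have step2 : B \ B' ⊆ S := by
    intro b₁ hb₁
    obtain ⟨b₂, hb₂, hmem⟩ := hM B hB B' hB'M b₁ hb₁
    obtain ⟨hb₂B', hb₂B⟩ := Finset.mem_sdiff.mp hb₂
    obtain ⟨hb₁B, hb₁B'⟩ := Finset.mem_sdiff.mp hb₁
    have hws : wsum ω (insert b₂ (B.erase b₁)) = wsum ω B - ω b₁ + ω b₂ := by
      unfold wsum
      rw [Finset.sum_insert (fun h => hb₂B (Finset.mem_of_mem_erase h)),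
          Finset.sum_erase_eq_sub hb₁B]
      ring
    have hle : ω b₂ ≤ ω b₁ := by
      have := hmax _ hmem
      rw [hws] at this
      linarith
    exact hS b₂ (step1 hb₂) b₁ hle
  have hsplit : ∀ B'' : Finset (Fin n), B'' ∈ M → B'' \ B' ⊆ S → B' \ B'' ⊆ S →
      (S ∩ B'').card = (S ∩ B'' ∩ B').card + (B'' \ B').card := by
    intro B'' _ hs1 _
    have hset : S ∩ B'' = (S ∩ B'' ∩ B') ∪ (B'' \ B') := by
      ext x
      simp only [Finset.mem_inter, Finset.mem_union, Finset.mem_sdiff]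
      constructor
      · rintro ⟨hxS, hxB⟩
        by_cases hx' : x ∈ B'
        · exact Or.inl ⟨⟨hxS, hxB⟩, hx'⟩
        · exact Or.inr ⟨hxB, hx'⟩
      · rintro (⟨⟨hxS, hxB⟩, _⟩ | ⟨hxB, hxn⟩)
        · exact ⟨hxS, hxB⟩
        · exact ⟨hs1 (Finset.mem_sdiff.mpr ⟨hxB, hxn⟩), hxB⟩
    rw [congrArg Finset.card hset, Finset.card_union_of_disjoint]
    rw [Finset.disjoint_left]
    intro x hx hx'
    exact (Finset.mem_sdiff.mp hx').2 (Finset.mem_inter.mp hx).2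
  have e1 := hsplit B hB step2 step1
  have hsplit2 : (S ∩ B').card = (S ∩ B' ∩ B).card + (B' \ B).card := by
    have hset : S ∩ B' = (S ∩ B' ∩ B) ∪ (B' \ B) := by
      ext x
      simp only [Finset.mem_inter, Finset.mem_union, Finset.mem_sdiff]
      constructor
      · rintro ⟨hxS, hxB⟩
        by_cases hx' : x ∈ B
        · exact Or.inl ⟨⟨hxS, hxB⟩, hx'⟩
        · exact Or.inr ⟨hxB, hx'⟩
      · rintro (⟨⟨hxS, hxB⟩, _⟩ | ⟨hxB, hxn⟩)
        · exact ⟨hxS, hxB⟩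
        · exact ⟨step1 (Finset.mem_sdiff.mpr ⟨hxB, hxn⟩), hxB⟩
    rw [congrArg Finset.card hset, Finset.card_union_of_disjoint]
    rw [Finset.disjoint_left]
    intro x hx hx'
    exact (Finset.mem_sdiff.mp hx').2 (Finset.mem_inter.mp hx).2
  have heq := equicard hM B hB B' hB'M
  have d1 := Finset.card_sdiff_add_card_inter B B'
  have d2 := Finset.card_sdiff_add_card_inter B' B
  have hc1 : (B ∩ B').card = (B' ∩ B).card := by rw [Finset.inter_comm]
  have hc2 : (S ∩ B ∩ B').card = (S ∩ B' ∩ B).card := by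
    rw [Finset.inter_assoc, Finset.inter_comm B B', ← Finset.inter_assoc]
  omega

/-! ### Flag weights -/

def wt (C : Fin n → Finset (Fin n)) (e : Fin n) : ℕ := (univ.filter fun j => e ∈ C j).card

noncomputable def wpsum (C : Fin n → Finset (Fin n)) (B : Finset (Fin n)) : ℕ :=
  ∑ e ∈ B, 2 ^ (wt C e)

lemma wt_le {C : Fin n → Finset (Fin n)} (e : Fin n) : wt C e ≤ n := by
  have := Finset.card_filter_le (univ : Finset (Fin n)) (fun j => e ∈ C j)
  simpa [wt] using this

lemma mem_flag_iff {C : Fin n → Finset (Fin n)} (hmono : ∀ i j, i ≤ j → C i ⊆ C j)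
    {e : Fin n} {j : Fin n} : e ∈ C j ↔ n - (j : ℕ) ≤ wt C e := by
  constructor
  · intro he
    have hsub : Finset.Ici j ⊆ univ.filter (fun j' => e ∈ C j') := by
      intro j' hj'
      exact Finset.mem_filter.mpr ⟨Finset.mem_univ _, hmono j j' (Finset.mem_Ici.mp hj') he⟩
    have := Finset.card_le_card hsub
    rw [Fin.card_Ici] at this
    exact this
  · intro hle
    by_contra hne
    have hsub : univ.filter (fun j' => e ∈ C j') ⊆ Finset.Ioi j := by
      intro j' hj'
      rw [Finset.mem_Ioi]
      by_contra hlt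
      push_neg at hlt
      exact hne (hmono j' j hlt (Finset.mem_filter.mp hj').2)
    have := Finset.card_le_card hsub
    rw [Fin.card_Ioi] at this
    have hj : (j : ℕ) < n := j.isLt
    unfold wt at hle
    omega

lemma wt_inj {C : Fin n → Finset (Fin n)} (hcard : ∀ i : Fin n, (C i).card = (i : ℕ) + 1)
    (hmono : ∀ i j, i ≤ j → C i ⊆ C j) {e e' : Fin n} (h : wt C e = wt C e') : e = e' := by
  have hn : 0 < n := Fin.pos e
  have hlast : ∀ x : Fin n, x ∈ C ⟨n - 1, by omega⟩ := by
    intro x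
    have h1 : (C ⟨n - 1, by omega⟩).card = n := by rw [hcard]; simp; omega
    have : C ⟨n - 1, by omega⟩ = univ := Finset.eq_univ_of_card _ (by rw [h1]; simp)
    rw [this]; exact Finset.mem_univ x
  have hwt1 : ∀ x : Fin n, 1 ≤ wt C x := by
    intro x
    have := (mem_flag_iff hmono).mp (hlast x)
    simp at this
    omega
  set k : ℕ := n - wt C e with hk
  have hkn : k < n := by have := hwt1 e; omega
  have hmem : ∀ x : Fin n, wt C x = wt C e → x ∈ C ⟨k, hkn⟩ := by
    intro x hx
    rw [mem_flag_iff hmono]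
    have h1 := wt_le (C := C) e
    simp only []
    omega
  have he1 : e ∈ C ⟨k, hkn⟩ := hmem e rfl
  have he2 : e' ∈ C ⟨k, hkn⟩ := hmem e' h.symm
  rcases Nat.eq_zero_or_pos k with hk0 | hkpos
  · have h1 : (C ⟨k, hkn⟩).card = 1 := by rw [hcard]; simp [hk0]
    obtain ⟨a, ha⟩ := Finset.card_eq_one.mp h1
    rw [ha] at he1 he2
    rw [Finset.mem_singleton.mp he1, Finset.mem_singleton.mp he2]
  · have hkn' : k - 1 < n := by omega
    have hnot : ∀ x : Fin n, wt C x = wt C e → x ∉ C ⟨k - 1, hkn'⟩ := by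
      intro x hx hcon
      rw [mem_flag_iff hmono] at hcon
      have h1 := wt_le (C := C) e
      simp only [] at hcon
      omega
    have hsub : C ⟨k - 1, hkn'⟩ ⊆ C ⟨k, hkn⟩ := by
      apply hmono
      simp only [Fin.le_def, Fin.val_mk]
      omega
    have hsd : (C ⟨k, hkn⟩ \ C ⟨k - 1, hkn'⟩).card = 1 := by
      rw [Finset.card_sdiff_of_subset hsub, hcard, hcard]
      simp only [Fin.val_mk]
      omega
    obtain ⟨a, ha⟩ := Finset.card_eq_one.mp hsd
    have h1 : e ∈ C ⟨k, hkn⟩ \ C ⟨k - 1, hkn'⟩ :=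
      Finset.mem_sdiff.mpr ⟨he1, hnot e rfl⟩
    have h2 : e' ∈ C ⟨k, hkn⟩ \ C ⟨k - 1, hkn'⟩ :=
      Finset.mem_sdiff.mpr ⟨he2, hnot e' h.symm⟩
    rw [ha] at h1 h2
    rw [Finset.mem_singleton.mp h1, Finset.mem_singleton.mp h2]

lemma wpsum_inj {C : Fin n → Finset (Fin n)} (hcard : ∀ i : Fin n, (C i).card = (i : ℕ) + 1)
    (hmono : ∀ i j, i ≤ j → C i ⊆ C j) {B₁ B₂ : Finset (Fin n)}
    (h : wpsum C B₁ = wpsum C B₂) : B₁ = B₂ := by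
  have hinj : Function.Injective (wt C) := fun a b hab => wt_inj hcard hmono hab
  have him : ∀ B : Finset (Fin n), wpsum C B = ∑ k ∈ B.image (wt C), 2 ^ k := by
    intro B
    rw [Finset.sum_image (fun x _ y _ hxy => hinj hxy)]
    rfl
  have hsub : ∀ B : Finset (Fin n), B.image (wt C) ⊆ Finset.range (n + 1) := by
    intro B k hk
    obtain ⟨e, _, rfl⟩ := Finset.mem_image.mp hk
    rw [Finset.mem_range]
    have := wt_le (C := C) e
    omega
  have := sum_two_pow_inj (n + 1) _ _ (hsub B₁) (hsub B₂) (by rw [← him, ← him]; exact h)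
  exact Finset.image_injective hinj this




variable {n : ℕ}

lemma exists_eps (D : Finset ℝ) (hD : ∀ d ∈ D, 0 < d) (Cst : ℝ) (hC : 0 < Cst) :
    ∃ ε : ℝ, 0 < ε ∧ ∀ d ∈ D, ε * Cst < d := by
  rcases D.eq_empty_or_nonempty with rfl | hne
  · exact ⟨1, one_pos, by simp⟩
  · have h1 : 0 < D.min' hne := hD _ (D.min'_mem hne)
    refine ⟨D.min' hne / (2 * Cst), by positivity, ?_⟩
    intro d hd
    have h2 : D.min' hne ≤ d := Finset.min'_le _ _ hd
    have h3 : D.min' hne / (2 * Cst) * Cst = D.min' hne / 2 := by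
      field_simp
    rw [h3]
    linarith

lemma lemmaH {M : Finset (Finset (Fin n))} (hM : IsBases M)
    {C : Fin n → Finset (Fin n)} (hcard : ∀ i : Fin n, (C i).card = (i : ℕ) + 1)
    (hmono : ∀ i j, i ≤ j → C i ⊆ C j) (lam : Fin n → ℝ)
    {B₀ : Finset (Fin n)} (hB₀M : B₀ ∈ M) (hB₀max : ∀ B' ∈ M, wsum lam B' ≤ wsum lam B₀)
    (hB₀w : ∀ B' ∈ M, (∀ B'' ∈ M, wsum lam B'' ≤ wsum lam B') → wpsum C B' ≤ wpsum C B₀)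
    {B : Finset (Fin n)} (hBM : B ∈ M) (hBmax : ∀ B' ∈ M, wsum lam B' ≤ wsum lam B)
    (j : Fin n) : (C j ∩ B).card ≤ (C j ∩ B₀).card := by
  classical
  set D : Finset ℝ := ((univ ×ˢ univ : Finset (Fin n × Fin n)).filter
      (fun p => lam p.1 < lam p.2)).image (fun p => lam p.2 - lam p.1) ∪
      ((M ×ˢ M).filter (fun p => wsum lam p.1 < wsum lam p.2)).image
      (fun p => wsum lam p.2 - wsum lam p.1) with hD
  have hDpos : ∀ d ∈ D, 0 < d := by
    intro d hd
    rw [hD, Finset.mem_union] at hd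
    rcases hd with hd | hd <;>
    · obtain ⟨p, hp, rfl⟩ := Finset.mem_image.mp hd
      have := (Finset.mem_filter.mp hp).2
      linarith
  obtain ⟨ε, hε, hεD⟩ := exists_eps D hDpos (((n : ℝ) + 1) * 2 ^ n) (by positivity)
  set ω : Fin n → ℝ := fun e => lam e + ε * (2 ^ (wt C e) : ℝ) with hω
  have hpow_le : ∀ e : Fin n, ((2:ℝ) ^ (wt C e)) ≤ 2 ^ n := by
    intro e
    exact pow_le_pow_right₀ (by norm_num) (wt_le e)
  have hsplit : ∀ B' : Finset (Fin n), wsum ω B' = wsum lam B' + ε * (wpsum C B' : ℝ) := by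
    intro B'
    have h1 : (wpsum C B' : ℝ) = ∑ e ∈ B', (2:ℝ) ^ (wt C e) := by
      unfold wpsum
      push_cast
      rfl
    rw [h1]
    unfold wsum
    rw [Finset.mul_sum, ← Finset.sum_add_distrib]
  have hwple : ∀ B' : Finset (Fin n), (wpsum C B' : ℝ) ≤ (n : ℝ) * 2 ^ n := by
    intro B'
    have h1 : wpsum C B' ≤ B'.card * 2 ^ n := by
      unfold wpsum
      calc ∑ e ∈ B', 2 ^ wt C e ≤ ∑ e ∈ B', 2 ^ n :=
            Finset.sum_le_sum fun e _ => Nat.pow_le_pow_right (by norm_num) (wt_le e)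
        _ = B'.card * 2 ^ n := by rw [Finset.sum_const, smul_eq_mul]
    have h2 : B'.card ≤ n := by
      have := Finset.card_le_univ B'
      simpa using this
    have h3 : wpsum C B' ≤ n * 2 ^ n := le_trans h1 (Nat.mul_le_mul_right _ h2)
    calc (wpsum C B' : ℝ) ≤ ((n * 2 ^ n : ℕ) : ℝ) := Nat.cast_le.mpr h3
      _ = (n : ℝ) * 2 ^ n := by push_cast; ring
  have hgapE : ∀ e e' : Fin n, lam e < lam e' → lam e + ε * (((n:ℝ) + 1) * 2 ^ n) < lam e' := by
    intro e e' hlt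
    have hd : lam e' - lam e ∈ D := by
      rw [hD, Finset.mem_union]
      left
      exact Finset.mem_image.mpr ⟨(e, e'), Finset.mem_filter.mpr
        ⟨Finset.mem_product.mpr ⟨Finset.mem_univ _, Finset.mem_univ _⟩, hlt⟩, rfl⟩
    have := hεD _ hd
    linarith
  have hgapB : ∀ B₁ B₂ : Finset (Fin n), B₁ ∈ M → B₂ ∈ M → wsum lam B₁ < wsum lam B₂ →
      wsum lam B₁ + ε * (((n:ℝ) + 1) * 2 ^ n) < wsum lam B₂ := by
    intro B₁ B₂ h₁ h₂ hlt
    have hd : wsum lam B₂ - wsum lam B₁ ∈ D := by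
      rw [hD, Finset.mem_union]
      right
      exact Finset.mem_image.mpr ⟨(B₁, B₂), Finset.mem_filter.mpr
        ⟨Finset.mem_product.mpr ⟨h₁, h₂⟩, hlt⟩, rfl⟩
    have := hεD _ hd
    linarith
  have hordkey : ∀ e e' : Fin n, lam e < lam e' → ω e < ω e' := by
    intro e e' hlt
    have h1 : ω e ≤ lam e + ε * 2 ^ n := by
      simp only [hω]
      have := mul_le_mul_of_nonneg_left (hpow_le e) hε.le
      linarith
    have h2 : lam e' ≤ ω e' := by
      simp only [hω]
      have : (0:ℝ) ≤ ε * 2 ^ (wt C e') := by positivity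
      linarith
    have h3 : ε * 2 ^ n ≤ ε * (((n:ℝ) + 1) * 2 ^ n) := by
      apply mul_le_mul_of_nonneg_left _ hε.le
      have hp : (0:ℝ) < 2 ^ n := by positivity
      nlinarith
    have := hgapE e e' hlt
    linarith
  have hωord : ∀ e e' : Fin n, ω e ≤ ω e' → lam e ≤ lam e' := by
    intro e e' hle
    by_contra hcon
    push_neg at hcon
    exact absurd hle (not_le.mpr (hordkey e' e hcon))
  have hB₀ω : ∀ B' ∈ M, wsum ω B' ≤ wsum ω B₀ := by
    intro B' hB'
    by_cases h : ∀ B'' ∈ M, wsum lam B'' ≤ wsum lam B'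
    · have heq : wsum lam B' = wsum lam B₀ := le_antisymm (hB₀max B' hB') (h B₀ hB₀M)
      have hwp : wpsum C B' ≤ wpsum C B₀ := hB₀w B' hB' h
      rw [hsplit, hsplit, heq]
      have h1 : (wpsum C B' : ℝ) ≤ (wpsum C B₀ : ℝ) := Nat.cast_le.mpr hwp
      have := mul_le_mul_of_nonneg_left h1 hε.le
      linarith
    · push_neg at h
      obtain ⟨B₁, hB₁, hlt⟩ := h
      have hlt2 : wsum lam B' < wsum lam B₀ := lt_of_lt_of_le hlt (hB₀max B₁ hB₁)
      have hgap := hgapB _ _ hB' hB₀M hlt2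
      rw [hsplit, hsplit]
      have h1 : ε * (wpsum C B' : ℝ) ≤ ε * ((n:ℝ) * 2 ^ n) :=
        mul_le_mul_of_nonneg_left (hwple B') hε.le
      have h2 : (0:ℝ) ≤ ε * (wpsum C B₀ : ℝ) := by positivity
      have h3 : ε * ((n:ℝ) * 2 ^ n) ≤ ε * (((n:ℝ) + 1) * 2 ^ n) := by
        apply mul_le_mul_of_nonneg_left _ hε.le
        have hp : (0:ℝ) < 2 ^ n := by positivity
        nlinarith
      linarith
  set vals : Finset ℝ := univ.image lam with hvals
  have hfib : ∀ B' : Finset (Fin n), (C j ∩ B').card =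
      ∑ v ∈ vals, ((C j ∩ B').filter (fun e => lam e = v)).card := by
    intro B'
    apply Finset.card_eq_sum_card_fiberwise
    intro x _
    exact Finset.mem_image.mpr ⟨x, Finset.mem_univ x, rfl⟩
  rw [hfib B, hfib B₀]
  apply Finset.sum_le_sum
  intro v _
  set Lv := univ.filter (fun e => v < lam e) with hLv
  set Rv := univ.filter (fun e => v < lam e ∨ (lam e = v ∧ e ∈ C j)) with hRv
  have hLup : ∀ e ∈ Lv, ∀ e', lam e ≤ lam e' → e' ∈ Lv := by
    intro e he e' hle
    rw [hLv, Finset.mem_filter] at he ⊢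
    exact ⟨Finset.mem_univ _, lt_of_lt_of_le he.2 hle⟩
  have hRup : ∀ e ∈ Rv, ∀ e', ω e ≤ ω e' → e' ∈ Rv := by
    intro e he e' hle
    rw [hRv, Finset.mem_filter] at he ⊢
    refine ⟨Finset.mem_univ _, ?_⟩
    have hlam := hωord e e' hle
    rcases he.2 with h | ⟨h1, h2⟩
    · exact Or.inl (lt_of_lt_of_le h hlam)
    · rcases lt_or_eq_of_le hlam with h3 | h3
      · exact Or.inl (by rw [← h1]; exact h3)
      · have hweq : ε * (2 ^ (wt C e) : ℝ) ≤ ε * (2 ^ (wt C e') : ℝ) := by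
          simp only [hω] at hle
          linarith [h3]
        have hple : (2:ℝ) ^ (wt C e) ≤ 2 ^ (wt C e') := (mul_le_mul_iff_right₀ hε).mp hweq
        have hwt : wt C e ≤ wt C e' := by
          by_contra hc
          push_neg at hc
          have := pow_lt_pow_right₀ (by norm_num : (1:ℝ) < 2) hc
          linarith
        refine Or.inr ⟨by rw [← h3]; exact h1, ?_⟩
        rw [mem_flag_iff hmono] at h2 ⊢
        omega
  have hLB : (Lv ∩ B).card = (Lv ∩ B₀).card := le_antisymm
    (estar hM hB₀M hB₀max (fun e he e' hle => hLup e he e' hle) B hBM)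
    (estar hM hBM hBmax (fun e he e' hle => hLup e he e' hle) B₀ hB₀M)
  have hRB : (Rv ∩ B).card ≤ (Rv ∩ B₀).card := estar hM hB₀M hB₀ω hRup B hBM
  have hdec : ∀ B' : Finset (Fin n), (Rv ∩ B').card = (Lv ∩ B').card +
      ((C j ∩ B').filter (fun e => lam e = v)).card := by
    intro B'
    have hset : Rv ∩ B' = (Lv ∩ B') ∪ ((C j ∩ B').filter (fun e => lam e = v)) := by
      ext x
      simp only [hRv, hLv, Finset.mem_filter, Finset.mem_inter, Finset.mem_union,
        Finset.mem_univ, true_and]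
      constructor
      · rintro ⟨h | ⟨h1, h2⟩, hxB⟩
        · exact Or.inl ⟨h, hxB⟩
        · exact Or.inr ⟨⟨h2, hxB⟩, h1⟩
      · rintro (⟨h, hxB⟩ | ⟨⟨h2, hxB⟩, h1⟩)
        · exact ⟨Or.inl h, hxB⟩
        · exact ⟨Or.inr ⟨h1, h2⟩, hxB⟩
    rw [congrArg Finset.card hset, Finset.card_union_of_disjoint]
    rw [Finset.disjoint_left]
    intro x hx hx'
    have h1 : v < lam x := by
      have := (Finset.mem_inter.mp hx).1
      rw [hLv, Finset.mem_filter] at this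
      exact this.2
    have h2 : lam x = v := (Finset.mem_filter.mp hx').2
    linarith
  have d1 := hdec B
  have d2 := hdec B₀
  omega


open Classical in
noncomputable def ind (p : Prop) : ℤ := if p then 1 else 0

lemma ind_pos {p : Prop} (h : p) : ind p = 1 := by simp [ind, h]
lemma ind_neg {p : Prop} (h : ¬ p) : ind p = 0 := by simp [ind, h]
lemma ind_congr {p q : Prop} (h : p ↔ q) : ind p = ind q := by
  by_cases hp : p
  · rw [ind_pos hp, ind_pos (h.mp hp)]
  · rw [ind_neg hp, ind_neg (fun hq => hp (h.mpr hq))]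

lemma euler1d {ι : Type*} (s : Finset ι) (I : ι → Set ℝ) (c : ι → ℤ)
    (hcomp : ∀ i ∈ s, IsCompact (I i)) (hconv : ∀ i ∈ s, Convex ℝ (I i))
    (hzero : ∀ t : ℝ, ∑ i ∈ s, c i * ind (t ∈ I i) = 0) :
    ∑ i ∈ s, c i * ind (I i).Nonempty = 0 := by
  classical
  have hIcc : ∀ i ∈ s, (I i).Nonempty → I i = Set.Icc (sInf (I i)) (sSup (I i)) := by
    intro i hi hne
    exact eq_Icc_of_connected_compact ⟨hne, (hconv i hi).isPreconnected⟩ (hcomp i hi)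
  set E : Finset ℝ := (s.filter (fun i => (I i).Nonempty)).image (fun i => sSup (I i)) with hE
  set R : ι → ℝ → ℤ := fun i t => ind (t ∈ Set.Ico (sInf (I i)) (sSup (I i))) with hR
  have key : ∀ t : ℝ, ∀ i ∈ s, ∃ ηi : ℝ, 0 < ηi ∧ ∀ u, t < u → u < t + ηi →
      ind (u ∈ I i) = R i t := by
    intro t i hi
    rcases Set.eq_empty_or_nonempty (I i) with he | hne
    · refine ⟨1, one_pos, fun u h1 h2 => ?_⟩
      simp only [hR, he, Real.sInf_empty, Real.sSup_empty, Set.Ico_self]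
      rw [ind_neg (Set.notMem_empty u), ind_neg (Set.notMem_empty t)]
    · have hmem : ∀ u : ℝ, (u ∈ I i) ↔ (sInf (I i) ≤ u ∧ u ≤ sSup (I i)) := by
        intro u
        conv_lhs => rw [hIcc i hi hne]
        exact Set.mem_Icc
      have hab : sInf (I i) ≤ sSup (I i) := by
        obtain ⟨y, hy⟩ := hne
        have := (hmem y).mp hy
        linarith
      rcases lt_or_ge t (sInf (I i)) with h1 | h1
      · refine ⟨sInf (I i) - t, by linarith, fun u hu1 hu2 => ?_⟩
        simp only [hR]
        rw [ind_neg (fun hc => absurd ((hmem u).mp hc).1 (by linarith)),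
          ind_neg (fun hc => absurd (Set.mem_Ico.mp hc).1 (by linarith : ¬ (sInf (I i) ≤ t)))]
      · rcases lt_or_ge t (sSup (I i)) with h2 | h2
        · refine ⟨sSup (I i) - t, by linarith, fun u hu1 hu2 => ?_⟩
          simp only [hR]
          rw [ind_pos ((hmem u).mpr ⟨by linarith, by linarith⟩),
            ind_pos (Set.mem_Ico.mpr ⟨by linarith, by linarith⟩)]
        · refine ⟨1, one_pos, fun u hu1 hu2 => ?_⟩
          simp only [hR]
          rw [ind_neg (fun hc => absurd ((hmem u).mp hc).2 (by linarith)),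
            ind_neg (fun hc => absurd (Set.mem_Ico.mp hc).2 (by linarith : ¬ (t < sSup (I i))))]
  have hRzero : ∀ t : ℝ, ∑ i ∈ s, c i * R i t = 0 := by
    intro t
    rcases s.eq_empty_or_nonempty with rfl | hsne
    · simp
    · choose! η hη hprop using key t
      set η₀ : ℝ := s.inf' hsne η with hη₀
      have hη₀pos : 0 < η₀ := by
        rw [hη₀, Finset.lt_inf'_iff]
        intro i hi
        exact hη i hi
      have h1 : t < t + η₀ / 2 := by linarith
      have h2 : ∀ i ∈ s, t + η₀ / 2 < t + η i := by
        intro i hi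
        have : η₀ ≤ η i := Finset.inf'_le _ hi
        linarith
      have := hzero (t + η₀ / 2)
      rw [← this]
      apply Finset.sum_congr rfl
      intro i hi
      rw [hprop i hi _ h1 (h2 i hi)]
  have single : ∀ i ∈ s, ind (I i).Nonempty =
      ∑ t ∈ E, (ind (t ∈ I i) - R i t) := by
    intro i hi
    rcases Set.eq_empty_or_nonempty (I i) with he | hne
    · rw [ind_neg (by rw [he]; exact Set.not_nonempty_empty)]
      rw [eq_comm]
      apply Finset.sum_eq_zero
      intro t _
      simp only [hR, he, Real.sInf_empty, Real.sSup_empty, Set.Ico_self]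
      rw [ind_neg (Set.notMem_empty t)]
      ring
    · have hmem : ∀ u : ℝ, (u ∈ I i) ↔ (sInf (I i) ≤ u ∧ u ≤ sSup (I i)) := by
        intro u
        conv_lhs => rw [hIcc i hi hne]
        exact Set.mem_Icc
      have hab : sInf (I i) ≤ sSup (I i) := by
        obtain ⟨y, hy⟩ := hne
        have := (hmem y).mp hy
        linarith
      rw [ind_pos hne]
      have hterm : ∀ t : ℝ, ind (t ∈ I i) - R i t = ind (t = sSup (I i)) := by
        intro t
        simp only [hR]
        by_cases ht : t = sSup (I i)
        · rw [ind_pos ht, ht, ind_pos ((hmem _).mpr ⟨hab, le_refl _⟩),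
            ind_neg (fun hc => absurd (Set.mem_Ico.mp hc).2 (lt_irrefl _))]
          ring
        · rw [ind_neg ht]
          by_cases ht2 : t ∈ I i
          · obtain ⟨ha1, ha2⟩ := (hmem t).mp ht2
            rw [ind_pos ht2, ind_pos (Set.mem_Ico.mpr ⟨ha1, lt_of_le_of_ne ha2 ht⟩)]
            ring
          · rw [ind_neg ht2, ind_neg]
            · ring
            · intro hc
              obtain ⟨hc1, hc2⟩ := Set.mem_Ico.mp hc
              exact ht2 ((hmem t).mpr ⟨hc1, hc2.le⟩)
      rw [Finset.sum_congr rfl (fun t _ => hterm t)]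
      have hb : sSup (I i) ∈ E :=
        Finset.mem_image.mpr ⟨i, Finset.mem_filter.mpr ⟨hi, hne⟩, rfl⟩
      rw [eq_comm]
      calc ∑ t ∈ E, ind (t = sSup (I i))
          = ∑ t ∈ E, (if t = sSup (I i) then (1:ℤ) else 0) := by
            apply Finset.sum_congr rfl
            intro t _
            by_cases h : t = sSup (I i)
            · rw [ind_pos h, if_pos h]
            · rw [ind_neg h, if_neg h]
        _ = 1 := by rw [Finset.sum_ite_eq' E (sSup (I i)) (fun _ => (1:ℤ)), if_pos hb]
  calc ∑ i ∈ s, c i * ind (I i).Nonempty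
      = ∑ i ∈ s, c i * ∑ t ∈ E, (ind (t ∈ I i) - R i t) :=
        Finset.sum_congr rfl (fun i hi => by rw [← single i hi])
    _ = ∑ i ∈ s, ∑ t ∈ E, c i * (ind (t ∈ I i) - R i t) :=
        Finset.sum_congr rfl (fun i _ => Finset.mul_sum _ _ _)
    _ = ∑ t ∈ E, ∑ i ∈ s, c i * (ind (t ∈ I i) - R i t) := Finset.sum_comm
    _ = ∑ t ∈ E, ((∑ i ∈ s, c i * ind (t ∈ I i)) - ∑ i ∈ s, c i * R i t) := by
        apply Finset.sum_congr rfl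
        intro t _
        rw [← Finset.sum_sub_distrib]
        apply Finset.sum_congr rfl
        intro i _
        ring
    _ = 0 := by
        apply Finset.sum_eq_zero
        intro t _
        rw [hzero t, hRzero t]
        ring

lemma eulerNd : ∀ (k : ℕ) {ι : Type*} (s : Finset ι) (K : ι → Set (Fin k → ℝ)) (c : ι → ℤ),
    (∀ i ∈ s, IsCompact (K i)) → (∀ i ∈ s, Convex ℝ (K i)) →
    (∀ x, ∑ i ∈ s, c i * ind (x ∈ K i) = 0) →
    ∑ i ∈ s, c i * ind (K i).Nonempty = 0 := by
  intro k
  induction k with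
  | zero =>
    intro ι s K c hcomp hconv hzero
    classical
    have h := hzero (fun i => i.elim0)
    rw [← h]
    apply Finset.sum_congr rfl
    intro i _
    congr 1
    apply ind_congr
    constructor
    · rintro ⟨y, hy⟩
      have hyx : y = (fun i => i.elim0) := by funext a; exact a.elim0
      rwa [← hyx]
    · intro hc
      exact ⟨_, hc⟩
  | succ k ih =>
    intro ι s K c hcomp hconv hzero
    classical
    have hembcont : ∀ y : Fin k → ℝ, Continuous (fun t : ℝ => (Fin.snoc y t : Fin (k+1) → ℝ)) := by
      intro y
      apply continuous_pi
      intro j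
      induction j using Fin.lastCases with
      | last => simpa [Fin.snoc_last] using continuous_id'
      | cast i => simpa [Fin.snoc_castSucc] using continuous_const
    set π : (Fin (k+1) → ℝ) →ₗ[ℝ] (Fin k → ℝ) := LinearMap.funLeft ℝ ℝ Fin.castSucc with hπ
    have hπcont : Continuous π := by
      apply continuous_pi
      intro j
      exact continuous_apply _
    set J : ι → Set (Fin k → ℝ) := fun i => π '' (K i) with hJ
    have hmemJ : ∀ (i : ι) (y : Fin k → ℝ), y ∈ J i ↔ ∃ t : ℝ, (Fin.snoc y t : Fin (k+1) → ℝ) ∈ K i := by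
      intro i y
      constructor
      · rintro ⟨x, hx, rfl⟩
        refine ⟨x (Fin.last k), ?_⟩
        have hxx : (Fin.snoc (π x) (x (Fin.last k)) : Fin (k+1) → ℝ) = x := Fin.snoc_init_self x
        rwa [hxx]
      · rintro ⟨t, ht⟩
        refine ⟨Fin.snoc y t, ht, ?_⟩
        funext j
        simp [hπ, LinearMap.funLeft_apply, Fin.snoc_castSucc]
    have hslice_aff : ∀ y : Fin k → ℝ, ∀ i ∈ s,
        Convex ℝ {t : ℝ | (Fin.snoc y t : Fin (k+1) → ℝ) ∈ K i} := by
      intro y i hi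
      intro t₁ h₁ t₂ h₂ a b ha hb hab
      have hmem := (hconv i hi) h₁ h₂ ha hb hab
      have hkey : (Fin.snoc y (a • t₁ + b • t₂) : Fin (k+1) → ℝ)
          = a • (Fin.snoc y t₁ : Fin (k+1) → ℝ) + b • (Fin.snoc y t₂ : Fin (k+1) → ℝ) := by
        funext j
        induction j using Fin.lastCases with
        | last => simp [Fin.snoc_last]
        | cast l =>
          simp only [Fin.snoc_castSucc, Pi.add_apply, Pi.smul_apply, smul_eq_mul]
          linear_combination (y l) * hab.symm
      show (Fin.snoc y (a • t₁ + b • t₂) : Fin (k+1) → ℝ) ∈ K i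
      rw [hkey]
      exact hmem
    have hslice_comp : ∀ y : Fin k → ℝ, ∀ i ∈ s,
        IsCompact {t : ℝ | (Fin.snoc y t : Fin (k+1) → ℝ) ∈ K i} := by
      intro y i hi
      have hcl : IsClosed {t : ℝ | (Fin.snoc y t : Fin (k+1) → ℝ) ∈ K i} :=
        IsClosed.preimage (hembcont y) (hcomp i hi).isClosed
      have himg : IsCompact ((fun x : Fin (k+1) → ℝ => x (Fin.last k)) '' (K i)) :=
        (hcomp i hi).image (continuous_apply _)
      apply himg.of_isClosed_subset hcl
      intro t ht
      exact ⟨Fin.snoc y t, ht, by simp [Fin.snoc_last]⟩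
    have hJzero : ∀ y : Fin k → ℝ, ∑ i ∈ s, c i * ind (y ∈ J i) = 0 := by
      intro y
      have h1 := euler1d s (fun i => {t : ℝ | (Fin.snoc y t : Fin (k+1) → ℝ) ∈ K i}) c
        (fun i hi => hslice_comp y i hi) (fun i hi => hslice_aff y i hi)
        (fun t => hzero (Fin.snoc y t))
      rw [← h1]
      apply Finset.sum_congr rfl
      intro i _
      congr 1
      apply ind_congr
      rw [hmemJ i y]
      exact Iff.rfl
    have hJcomp : ∀ i ∈ s, IsCompact (J i) := fun i hi => (hcomp i hi).image hπcont
    have hJconv : ∀ i ∈ s, Convex ℝ (J i) := fun i hi => (hconv i hi).linear_image π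
    have hfin := ih s J c hJcomp hJconv hJzero
    rw [← hfin]
    apply Finset.sum_congr rfl
    intro i _
    congr 1
    apply ind_congr
    constructor
    · intro hne
      exact hne.image π
    · rintro ⟨y, x, hx, _⟩
      exact ⟨x, hx⟩


noncomputable def flin (C : Fin n → Finset (Fin n)) : (Fin n → ℝ) →ₗ[ℝ] ℝ :=
  ∑ e : Fin n, ((2:ℝ) ^ (wt C e)) • LinearMap.proj e

lemma flin_apply (C : Fin n → Finset (Fin n)) (x : Fin n → ℝ) :
    flin C x = ∑ e : Fin n, ((2:ℝ) ^ (wt C e)) * x e := by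
  simp [flin, LinearMap.sum_apply, LinearMap.smul_apply, LinearMap.proj_apply, smul_eq_mul]

lemma flin_indVec (C : Fin n → Finset (Fin n)) (B : Finset (Fin n)) :
    flin C (indVec n B) = (wpsum C B : ℝ) := by
  classical
  rw [flin_apply]
  have h1 : (wpsum C B : ℝ) = ∑ e ∈ B, (2:ℝ) ^ (wt C e) := by
    unfold wpsum
    push_cast
    rfl
  rw [h1]
  have h2 : ∀ e : Fin n, ((2:ℝ) ^ (wt C e)) * indVec n B e
      = if e ∈ B then ((2:ℝ) ^ (wt C e)) else 0 := by
    intro e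
    simp only [indVec]
    split_ifs <;> ring
  rw [Finset.sum_congr rfl (fun e _ => h2 e), Finset.sum_ite_mem, Finset.univ_inter]

lemma polytope_compact (𝓝 : Finset (Finset (Fin n))) : IsCompact (polytope 𝓝) :=
  Set.Finite.isCompact_convexHull ℝ ((𝓝.finite_toSet).image _)

lemma polytope_convex (𝓝 : Finset (Finset (Fin n))) : Convex ℝ (polytope 𝓝) :=
  convex_convexHull ℝ _

lemma norm_indVec_sub_le (B B' : Finset (Fin n)) : ‖indVec n B - indVec n B'‖ ≤ 1 := by
  refine (pi_norm_le_iff_of_nonneg zero_le_one).mpr ?_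
  intro i
  simp only [Pi.sub_apply, indVec, Real.norm_eq_abs]
  split_ifs <;> norm_num


variable {m : ℕ} {𝓑 : Finset (Finset (Fin n))} {𝓜 : Fin m → Finset (Finset (Fin n))}

lemma mem_interMatroid {A : Finset (Fin m)} {B' : Finset (Fin n)} :
    B' ∈ interMatroid 𝓑 𝓜 A ↔ B' ∈ 𝓑 ∧ ∀ a ∈ A, indVec n B' ∈ polytope (𝓜 a) := by
  classical
  unfold interMatroid
  rw [Finset.filter_congr_decidable]
  exact Finset.mem_filter

lemma pieces_subset (hsub : IsMatroidSubdivision 𝓑 𝓜) (a : Fin m) :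
    polytope (𝓜 a) ⊆ polytope 𝓑 := by
  have h := hsub.2.2.1
  rw [← h]
  exact Set.subset_iUnion (fun i => polytope (𝓜 i)) a

lemma pieces_bases_subset (hsub : IsMatroidSubdivision 𝓑 𝓜) (a : Fin m) : 𝓜 a ⊆ 𝓑 :=
  fun _ hB => mem_polytope_iff.mp (pieces_subset hsub a (indVec_mem_polytope hB))

lemma cover_bases (hsub : IsMatroidSubdivision 𝓑 𝓜) {B : Finset (Fin n)} (hB : B ∈ 𝓑) :
    ∃ a, B ∈ 𝓜 a := by
  have h := hsub.2.2.1
  have h2 : indVec n B ∈ ⋃ i, polytope (𝓜 i) := by rw [h]; exact indVec_mem_polytope hB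
  obtain ⟨a, ha⟩ := Set.mem_iUnion.mp h2
  exact ⟨a, mem_polytope_iff.mp ha⟩

lemma extreme_fold (hsub : IsMatroidSubdivision 𝓑 𝓜) (a₀ : Fin m) (s : Finset (Fin m))
    (hs : ∀ b ∈ s, b ≠ a₀) :
    IsExtreme ℝ (polytope (𝓜 a₀)) (polytope (𝓜 a₀) ∩ ⋂ b ∈ s, polytope (𝓜 b)) := by
  classical
  induction s using Finset.induction with
  | empty => simpa using IsExtreme.rfl
  | @insert b s hbs ih =>
    have hba₀ : b ≠ a₀ := hs b (Finset.mem_insert_self b s)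
    have h1 : polytope (𝓜 a₀) ∩ ⋂ c ∈ insert b s, polytope (𝓜 c)
        = (polytope (𝓜 a₀) ∩ polytope (𝓜 b)) ∩
          (polytope (𝓜 a₀) ∩ ⋂ c ∈ s, polytope (𝓜 c)) := by
      ext x
      simp only [Set.mem_inter_iff, Set.mem_iInter, Finset.mem_insert]
      constructor
      · rintro ⟨hx0, hx⟩
        exact ⟨⟨hx0, hx b (Or.inl rfl)⟩, hx0, fun c hc => hx c (Or.inr hc)⟩
      · rintro ⟨⟨hx0, hxb⟩, _, hx⟩
        refine ⟨hx0, fun c hc => ?_⟩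
        rcases hc with rfl | hc
        · exact hxb
        · exact hx c hc
    rw [h1]
    have hexp : IsExposed ℝ (polytope (𝓜 a₀)) (polytope (𝓜 a₀) ∩ polytope (𝓜 b)) :=
      (hsub.2.2.2.2 a₀ b (Ne.symm hba₀)).1
    exact (hexp.isExtreme).inter (ih (fun c hc => hs c (Finset.mem_insert_of_mem hc)))

lemma vertex_dominates (C : Fin n → Finset (Fin n)) {𝓝 : Finset (Finset (Fin n))}
    {x : Fin n → ℝ} (hx : x ∈ polytope 𝓝) {F : Set (Fin n → ℝ)}
    (hF : IsExtreme ℝ (polytope 𝓝) F) (hxF : x ∈ F) :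
    ∃ B' ∈ 𝓝, indVec n B' ∈ F ∧ flin C x ≤ (wpsum C B' : ℝ) := by
  classical
  set t : Finset (Fin n → ℝ) := 𝓝.image (indVec n) with ht
  have hpoly : polytope 𝓝 = convexHull ℝ (↑t : Set (Fin n → ℝ)) := by
    unfold polytope; rw [ht, Finset.coe_image]
  have hx2 := hx
  rw [hpoly, Finset.convexHull_eq] at hx2
  obtain ⟨w, hw0, hw1, hcm⟩ := hx2
  have hxsum : ∑ y ∈ t, w y • y = x := by
    have h := Finset.centerMass_eq_of_sum_1 t id hw1
    simp only [id_eq] at h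
    rw [← h]
    exact hcm
  have hvmem : ∀ y ∈ t, y ∈ polytope 𝓝 := by
    intro y hy
    obtain ⟨B'', hB'', rfl⟩ := Finset.mem_image.mp hy
    exact indVec_mem_polytope hB''
  set sup := t.filter (fun y => 0 < w y) with hsup
  have hsupne : sup.Nonempty := by
    by_contra hc
    rw [Finset.not_nonempty_iff_eq_empty] at hc
    have hzz : ∑ y ∈ t, w y = 0 := by
      apply Finset.sum_eq_zero
      intro y hy
      by_contra hwy
      have : 0 < w y := lt_of_le_of_ne (hw0 y hy) (Ne.symm hwy)
      have : y ∈ sup := Finset.mem_filter.mpr ⟨hy, this⟩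
      rw [hc] at this
      exact absurd this (Finset.notMem_empty _)
    rw [hw1] at hzz
    norm_num at hzz
  obtain ⟨ys, hys, hysmax⟩ := Finset.exists_max_image sup (fun y => flin C y) hsupne
  have hyst : ys ∈ t := (Finset.mem_filter.mp hys).1
  obtain ⟨Bs, hBs, hBsy⟩ := Finset.mem_image.mp hyst
  have hflinle : flin C x ≤ flin C ys := by
    have h1 : flin C x = ∑ y ∈ t, w y * flin C y := by
      rw [← hxsum, map_sum]
      apply Finset.sum_congr rfl
      intro y _
      rw [map_smul, smul_eq_mul]
    have h2 : ∑ y ∈ t, w y * flin C y ≤ ∑ y ∈ t, w y * flin C ys := by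
      apply Finset.sum_le_sum
      intro y hy
      rcases eq_or_lt_of_le (hw0 y hy) with heq | hlt
      · rw [← heq]; ring_nf; exact le_refl _
      · exact mul_le_mul_of_nonneg_left
          (hysmax y (Finset.mem_filter.mpr ⟨hy, hlt⟩)) (hw0 y hy)
    have h3 : ∑ y ∈ t, w y * flin C ys = flin C ys := by
      rw [← Finset.sum_mul, hw1, one_mul]
    rw [h1]
    rw [h3] at h2
    exact h2
  have hysF : ys ∈ F := by
    apply extreme_vertex_mem (polytope_convex 𝓝) hF (s := t) (w := w) (y := id) hw0 hw1
      (fun y hy => hvmem y hy) _ hyst (Finset.mem_filter.mp hys).2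
    simp only [id_eq]
    rw [hxsum]
    exact hxF
  refine ⟨Bs, hBs, by rw [hBsy]; exact hysF, ?_⟩
  rw [← flin_indVec, hBsy]
  exact hflinle

lemma geom (hsub : IsMatroidSubdivision 𝓑 𝓜) (C : Fin n → Finset (Fin n))
    {B : Finset (Fin n)} (hB : B ∈ 𝓑)
    (hTne : (univ.filter (fun a : Fin m => B ∈ 𝓜 a)).Nonempty) :
    ∑ A ∈ (univ.filter (fun a : Fin m => B ∈ 𝓜 a)).powerset,
      (-1:ℤ) ^ A.card * ind (∃ B' ∈ interMatroid 𝓑 𝓜 A, wpsum C B < wpsum C B') = 0 := by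
  classical
  set T := univ.filter (fun a : Fin m => B ∈ 𝓜 a) with hT
  by_cases hbet : ∃ B' ∈ 𝓑, wpsum C B < wpsum C B'
  · obtain ⟨B₁, hB₁, hB₁lt⟩ := hbet
    set better := 𝓑.filter (fun B' => wpsum C B < wpsum C B') with hbetter
    have hbne : (better.image (wpsum C)).Nonempty :=
      ⟨wpsum C B₁, Finset.mem_image.mpr ⟨B₁, Finset.mem_filter.mpr ⟨hB₁, hB₁lt⟩, rfl⟩⟩
    set cg : ℕ := (better.image (wpsum C)).min' hbne with hcg
    have hcg_gt : wpsum C B < cg := by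
      obtain ⟨B₂, hB₂, hB₂eq⟩ := Finset.mem_image.mp (Finset.min'_mem _ hbne)
      rw [hcg, ← hB₂eq]
      exact (Finset.mem_filter.mp hB₂).2
    have hcg_le : ∀ B' ∈ better, (cg:ℝ) ≤ (wpsum C B' : ℝ) := by
      intro B' hB'
      exact_mod_cast Finset.min'_le _ _ (Finset.mem_image.mpr ⟨B', hB', rfl⟩)
    set v := indVec n B with hv
    have hvP : v ∈ polytope 𝓑 := indVec_mem_polytope hB
    have hvPs : ∀ a ∈ T, v ∈ polytope (𝓜 a) := by
      intro a ha
      exact indVec_mem_polytope ((Finset.mem_filter.mp ha).2)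
    set g : Fin m → ℝ := fun b => if B ∈ 𝓜 b ∨ (𝓜 b) = ∅ then 1
        else Metric.infDist v (polytope (𝓜 b)) with hg
    have hgpos : ∀ b, 0 < g b := by
      intro b
      rw [hg]
      simp only []
      split_ifs with hcase
      · exact one_pos
      · push_neg at hcase
        obtain ⟨h1, h2⟩ := hcase
        have hne2 : (polytope (𝓜 b)).Nonempty := by
          obtain ⟨B₂, hB₂⟩ := h2
          exact ⟨_, indVec_mem_polytope hB₂⟩
        rw [← (polytope_compact (𝓜 b)).isClosed.notMem_iff_infDist_pos hne2]
        intro hcon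
        exact h1 (mem_polytope_iff.mp hcon)
    obtain ⟨a₁, _⟩ := hTne
    have huniv : (univ : Finset (Fin m)).Nonempty := ⟨a₁, Finset.mem_univ _⟩
    set δ : ℝ := min 1 (univ.inf' huniv g) / 2 with hδ
    have hinfpos : 0 < univ.inf' huniv g := by
      rw [Finset.lt_inf'_iff]
      intro b _
      exact hgpos b
    have hδpos : 0 < δ := by
      rw [hδ]
      have : 0 < min 1 (univ.inf' huniv g) := lt_min one_pos hinfpos
      linarith
    have hδ1 : δ ≤ 1 := by
      rw [hδ]
      have : min 1 (univ.inf' huniv g) ≤ 1 := min_le_left _ _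
      linarith
    have hδfar : ∀ b, B ∉ 𝓜 b → ∀ x ∈ polytope (𝓜 b), δ < dist v x := by
      intro b hb x hx
      have h𝓜ne : 𝓜 b ≠ ∅ := by
        intro hcon
        rw [hcon] at hx
        unfold polytope at hx
        simp at hx
      have hgb : g b = Metric.infDist v (polytope (𝓜 b)) := by
        rw [hg]
        simp only []
        rw [if_neg]
        push_neg
        exact ⟨hb, Finset.nonempty_iff_ne_empty.mpr h𝓜ne⟩
      have h2 : Metric.infDist v (polytope (𝓜 b)) ≤ dist v x := Metric.infDist_le_dist_of_mem hx
      have h3 : univ.inf' huniv g ≤ g b := Finset.inf'_le _ (Finset.mem_univ b)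
      have h4 : δ < univ.inf' huniv g := by
        rw [hδ]
        rcases le_or_gt 1 (univ.inf' huniv g) with h6 | h6
        · rw [min_eq_left h6]; linarith
        · rw [min_eq_right h6.le]; linarith
      linarith [hgb.le]
    set cc : ℝ := (wpsum C B : ℝ) + δ * ((cg:ℝ) - (wpsum C B : ℝ)) with hcc
    have hcgR : (wpsum C B : ℝ) < (cg : ℝ) := by exact_mod_cast hcg_gt
    have hccgt : (wpsum C B : ℝ) < cc := by
      rw [hcc]
      nlinarith
    set KK : Finset (Fin m) → Set (Fin n → ℝ) := fun A =>
      polytope 𝓑 ∩ (⋂ a ∈ A, polytope (𝓜 a)) ∩ {x | cc ≤ flin C x} ∩ Metric.closedBall v δ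
      with hKK
    have hKmem : ∀ (A : Finset (Fin m)) (x : Fin n → ℝ), x ∈ KK A ↔
        (x ∈ polytope 𝓑 ∧ (∀ a ∈ A, x ∈ polytope (𝓜 a)) ∧ cc ≤ flin C x ∧ dist x v ≤ δ) := by
      intro A x
      rw [hKK]
      simp only [Set.mem_inter_iff, Set.mem_iInter, Set.mem_setOf_eq, Metric.mem_closedBall]
      tauto
    have hKconv : ∀ A : Finset (Fin m), Convex ℝ (KK A) := by
      intro A
      rw [hKK]
      exact (((polytope_convex 𝓑).inter
        (convex_iInter₂ (fun a _ => polytope_convex (𝓜 a)))).inter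
        (convex_halfSpace_ge (LinearMap.isLinear (flin C)) cc)).inter (convex_closedBall v δ)
    have hKcomp : ∀ A : Finset (Fin m), IsCompact (KK A) := by
      intro A
      apply IsCompact.of_isClosed_subset (polytope_compact 𝓑)
      · rw [hKK]
        exact (((polytope_compact 𝓑).isClosed.inter
          (isClosed_biInter (fun a (_ : a ∈ A) => (polytope_compact (𝓜 a)).isClosed))).inter
          (isClosed_le continuous_const (flin C).continuous_of_finiteDimensional)).inter
          Metric.isClosed_closedBall
      · intro x hx
        exact ((hKmem A x).mp hx).1
    have hiff : ∀ A ∈ T.powerset,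
        ((KK A).Nonempty ↔ ∃ B' ∈ interMatroid 𝓑 𝓜 A, wpsum C B < wpsum C B') := by
      intro A hA
      have hAT : A ⊆ T := Finset.mem_powerset.mp hA
      constructor
      · rintro ⟨x, hx⟩
        obtain ⟨hxP, hxPs, hxf, _⟩ := (hKmem A x).mp hx
        rcases A.eq_empty_or_nonempty with rfl | ⟨a₀, ha₀⟩
        · obtain ⟨Bs, hBs, _, hBsf⟩ := vertex_dominates C hxP IsExtreme.rfl hxP
          refine ⟨Bs, mem_interMatroid.mpr
            ⟨hBs, fun a ha => absurd ha (Finset.notMem_empty a)⟩, ?_⟩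
          have hh : (wpsum C B : ℝ) < (wpsum C Bs : ℝ) := by
            calc (wpsum C B : ℝ) < cc := hccgt
            _ ≤ flin C x := hxf
            _ ≤ _ := hBsf
          exact_mod_cast hh
        · have hxa₀ : x ∈ polytope (𝓜 a₀) := hxPs a₀ ha₀
          have hF : IsExtreme ℝ (polytope (𝓜 a₀))
              (polytope (𝓜 a₀) ∩ ⋂ b ∈ A.erase a₀, polytope (𝓜 b)) :=
            extreme_fold hsub a₀ (A.erase a₀) (fun b hb => (Finset.mem_erase.mp hb).1)
          have hxF : x ∈ polytope (𝓜 a₀) ∩ ⋂ b ∈ A.erase a₀, polytope (𝓜 b) :=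
            ⟨hxa₀, Set.mem_iInter₂.mpr (fun b hb => hxPs b (Finset.mem_of_mem_erase hb))⟩
          obtain ⟨Bs, hBs𝓜, hBsF, hBsf⟩ := vertex_dominates C hxa₀ hF hxF
          refine ⟨Bs, mem_interMatroid.mpr ⟨pieces_bases_subset hsub a₀ hBs𝓜, ?_⟩, ?_⟩
          · intro a ha
            by_cases haa₀ : a = a₀
            · rw [haa₀]; exact hBsF.1
            · exact Set.mem_iInter₂.mp hBsF.2 a (Finset.mem_erase.mpr ⟨haa₀, ha⟩)
          · have hh : (wpsum C B : ℝ) < (wpsum C Bs : ℝ) := by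
              calc (wpsum C B : ℝ) < cc := hccgt
              _ ≤ flin C x := hxf
              _ ≤ _ := hBsf
            exact_mod_cast hh
      · rintro ⟨B', hB', hlt⟩
        obtain ⟨hB'𝓑, hB'mem⟩ := mem_interMatroid.mp hB'
        set z := indVec n B' with hz
        set p := v + δ • (z - v) with hp
        have hzP : z ∈ polytope 𝓑 := indVec_mem_polytope hB'𝓑
        have hcomb : p = (1 - δ) • v + δ • z := by
          rw [hp]
          funext i
          simp only [Pi.add_apply, Pi.smul_apply, Pi.sub_apply, smul_eq_mul]
          ring
        refine ⟨p, (hKmem A p).mpr ⟨?_, ?_, ?_, ?_⟩⟩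
        · rw [hcomb]
          exact (polytope_convex 𝓑) hvP hzP (by linarith) hδpos.le (by ring)
        · intro a ha
          rw [hcomb]
          exact (polytope_convex (𝓜 a)) (hvPs a (hAT ha)) (hB'mem a ha)
            (by linarith) hδpos.le (by ring)
        · have hfp : flin C p
              = (wpsum C B : ℝ) + δ * ((wpsum C B' : ℝ) - (wpsum C B : ℝ)) := by
            rw [hp, map_add, map_smul, map_sub]
            rw [hz, hv, flin_indVec, flin_indVec]
            simp only [smul_eq_mul]
            try ring
          rw [hfp, hcc]
          have h1 : (cg : ℝ) ≤ (wpsum C B' : ℝ) :=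
            hcg_le B' (Finset.mem_filter.mpr ⟨hB'𝓑, hlt⟩)
          nlinarith
        · have hpv : p - v = δ • (z - v) := by rw [hp]; exact add_sub_cancel_left v _
          rw [dist_eq_norm, hpv, norm_smul, Real.norm_eq_abs, abs_of_nonneg hδpos.le]
          have h1 : ‖z - v‖ ≤ 1 := norm_indVec_sub_le B' B
          nlinarith
    have hzero : ∀ x : Fin n → ℝ,
        ∑ A ∈ T.powerset, (-1:ℤ)^A.card * ind (x ∈ KK A) = 0 := by
      intro x
      by_cases hx0 : x ∈ KK (∅ : Finset (Fin m))
      · obtain ⟨hxP, _, hxf, hxball⟩ := (hKmem ∅ x).mp hx0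
        set Sx := T.filter (fun a => x ∈ polytope (𝓜 a)) with hSx
        have hSxne : Sx.Nonempty := by
          have h2 : x ∈ ⋃ i, polytope (𝓜 i) := by rw [hsub.2.2.1]; exact hxP
          obtain ⟨b, hb⟩ := Set.mem_iUnion.mp h2
          have hbT : b ∈ T := by
            rw [hT, Finset.mem_filter]
            refine ⟨Finset.mem_univ _, ?_⟩
            by_contra hcon
            have hfar := hδfar b hcon x hb
            rw [dist_comm] at hfar
            linarith
          exact ⟨b, Finset.mem_filter.mpr ⟨hbT, hb⟩⟩
        have hindeq : ∀ A ∈ T.powerset, ind (x ∈ KK A) = ind (A ⊆ Sx) := by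
          intro A hA
          apply ind_congr
          rw [hKmem]
          constructor
          · rintro ⟨_, hPs, _, _⟩
            intro a ha
            exact Finset.mem_filter.mpr ⟨Finset.mem_powerset.mp hA ha, hPs a ha⟩
          · intro hAS
            exact ⟨hxP, fun a ha => (Finset.mem_filter.mp (hAS ha)).2, hxf, hxball⟩
        rw [Finset.sum_congr rfl (fun A hA => by rw [hindeq A hA])]
        rw [← Finset.sum_subset
          (Finset.powerset_mono.mpr (Finset.filter_subset _ _) : Sx.powerset ⊆ T.powerset)]
        · rw [Finset.sum_congr rfl (fun A hA =>
            by rw [ind_pos (Finset.mem_powerset.mp hA), mul_one])]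
          exact Finset.sum_powerset_neg_one_pow_card_of_nonempty hSxne
        · intro A _ hA2
          rw [ind_neg (fun hc => hA2 (Finset.mem_powerset.mpr hc)), mul_zero]
      · apply Finset.sum_eq_zero
        intro A _
        rw [ind_neg, mul_zero]
        intro hc
        apply hx0
        obtain ⟨h1, _, h3, h4⟩ := (hKmem A x).mp hc
        exact (hKmem ∅ x).mpr ⟨h1, fun a ha => absurd ha (Finset.notMem_empty a), h3, h4⟩
    have heuler := eulerNd n (T.powerset) KK (fun A => (-1)^A.card)
      (fun A _ => hKcomp A) (fun A _ => hKconv A) hzero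
    rw [← heuler]
    apply Finset.sum_congr rfl
    intro A hA
    congr 1
    exact ind_congr (hiff A hA).symm
  · apply Finset.sum_eq_zero
    intro A _
    rw [ind_neg, mul_zero]
    rintro ⟨B', hB', hlt⟩
    exact hbet ⟨B', (mem_interMatroid.mp hB').1, hlt⟩


lemma exposed_fold (hsub : IsMatroidSubdivision 𝓑 𝓜) (a₀ : Fin m) (s : Finset (Fin m))
    (hs : ∀ b ∈ s, b ≠ a₀) :
    IsExposed ℝ (polytope (𝓜 a₀)) (polytope (𝓜 a₀) ∩ ⋂ b ∈ s, polytope (𝓜 b)) := by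
  classical
  induction s using Finset.induction with
  | empty => simpa using IsExposed.refl (polytope (𝓜 a₀))
  | @insert b s hbs ih =>
    have hba₀ : b ≠ a₀ := hs b (Finset.mem_insert_self b s)
    have h1 : polytope (𝓜 a₀) ∩ ⋂ c ∈ insert b s, polytope (𝓜 c)
        = (polytope (𝓜 a₀) ∩ polytope (𝓜 b)) ∩
          (polytope (𝓜 a₀) ∩ ⋂ c ∈ s, polytope (𝓜 c)) := by
      ext x
      simp only [Set.mem_inter_iff, Set.mem_iInter, Finset.mem_insert]
      constructor
      · rintro ⟨hx0, hx⟩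
        exact ⟨⟨hx0, hx b (Or.inl rfl)⟩, hx0, fun c hc => hx c (Or.inr hc)⟩
      · rintro ⟨⟨hx0, hxb⟩, _, hx⟩
        refine ⟨hx0, fun c hc => ?_⟩
        rcases hc with rfl | hc
        · exact hxb
        · exact hx c hc
    rw [h1]
    have hexp : IsExposed ℝ (polytope (𝓜 a₀)) (polytope (𝓜 a₀) ∩ polytope (𝓜 b)) :=
      (hsub.2.2.2.2 a₀ b (Ne.symm hba₀)).1
    exact hexp.inter (ih (fun c hc => hs c (Finset.mem_insert_of_mem hc)))

lemma indVec_eq_sum_single (B : Finset (Fin n)) :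
    indVec n B = ∑ e ∈ B, Pi.single e (1:ℝ) := by
  classical
  funext i
  rw [Finset.sum_apply]
  by_cases hi : i ∈ B
  · simp only [indVec, hi, if_true]
    rw [Finset.sum_congr rfl (fun e _ => Pi.single_apply e (1:ℝ) i)]
    rw [eq_comm]
    have h1 : ∀ e ∈ B, (if i = e then (1:ℝ) else 0) = (if e = i then (1:ℝ) else 0) := by
      intro e _
      by_cases h : i = e
      · rw [if_pos h, if_pos h.symm]
      · rw [if_neg h, if_neg (fun hc => h hc.symm)]
    rw [Finset.sum_congr rfl h1, Finset.sum_ite_eq' B i (fun _ => (1:ℝ)), if_pos hi]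
  · simp only [indVec, hi, if_false]
    rw [eq_comm]
    apply Finset.sum_eq_zero
    intro e he
    rw [Pi.single_apply, if_neg (fun hc : i = e => hi (hc ▸ he))]

lemma interMatroid_char (hsub : IsMatroidSubdivision 𝓑 𝓜) (A : Finset (Fin m))
    (hne : (interMatroid 𝓑 𝓜 A).Nonempty) :
    ∃ (M : Finset (Finset (Fin n))) (lam : Fin n → ℝ), IsBases M ∧
      ∀ B'' : Finset (Fin n), B'' ∈ interMatroid 𝓑 𝓜 A ↔
        (B'' ∈ M ∧ ∀ B₂ ∈ M, wsum lam B₂ ≤ wsum lam B'') := by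
  classical
  rcases A.eq_empty_or_nonempty with rfl | ⟨a₀, ha₀⟩
  · refine ⟨𝓑, fun _ => 0, hsub.1, ?_⟩
    intro B''
    rw [mem_interMatroid]
    constructor
    · rintro ⟨h1, _⟩
      refine ⟨h1, fun B₂ _ => ?_⟩
      unfold wsum
      simp
    · rintro ⟨h1, _⟩
      exact ⟨h1, fun a ha => absurd ha (Finset.notMem_empty a)⟩
  · have hexp : IsExposed ℝ (polytope (𝓜 a₀))
        (polytope (𝓜 a₀) ∩ ⋂ b ∈ A.erase a₀, polytope (𝓜 b)) :=
      exposed_fold hsub a₀ (A.erase a₀) (fun b hb => (Finset.mem_erase.mp hb).1)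
    obtain ⟨B₁, hB₁⟩ := hne
    obtain ⟨hB₁𝓑, hB₁mem⟩ := mem_interMatroid.mp hB₁
    have hFmem : ∀ B'' : Finset (Fin n), (∀ a ∈ A, indVec n B'' ∈ polytope (𝓜 a)) →
        indVec n B'' ∈ polytope (𝓜 a₀) ∩ ⋂ b ∈ A.erase a₀, polytope (𝓜 b) := by
      intro B'' h
      exact ⟨h a₀ ha₀, Set.mem_iInter₂.mpr fun b hb => h b (Finset.mem_of_mem_erase hb)⟩
    have hFne : (polytope (𝓜 a₀) ∩ ⋂ b ∈ A.erase a₀, polytope (𝓜 b)).Nonempty :=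
      ⟨indVec n B₁, hFmem B₁ hB₁mem⟩
    obtain ⟨l, hl⟩ := hexp hFne
    set lam : Fin n → ℝ := fun e => l (Pi.single e 1) with hlam
    have hlin : ∀ B'' : Finset (Fin n), l (indVec n B'') = wsum lam B'' := by
      intro B''
      rw [indVec_eq_sum_single, map_sum]
      rfl
    refine ⟨𝓜 a₀, lam, hsub.2.1 a₀, ?_⟩
    intro B''
    constructor
    · intro hB''
      obtain ⟨hB''𝓑, hB''mem⟩ := mem_interMatroid.mp hB''
      have hmemF := hFmem B'' hB''mem
      rw [hl] at hmemF
      obtain ⟨h1, h2⟩ := hmemF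
      refine ⟨mem_polytope_iff.mp h1, fun B₂ hB₂ => ?_⟩
      rw [← hlin, ← hlin]
      exact h2 _ (indVec_mem_polytope hB₂)
    · rintro ⟨h1, h2⟩
      have hmax : ∀ y ∈ polytope (𝓜 a₀), l y ≤ l (indVec n B'') := by
        intro y hy
        have hM : ∀ B₂ ∈ 𝓜 a₀, (l.toLinearMap) (indVec n B₂) ≤ l (indVec n B'') := by
          intro B₂ hB₂
          show l (indVec n B₂) ≤ l (indVec n B'')
          rw [hlin, hlin]
          exact h2 B₂ hB₂
        exact le_max_on_polytope (l.toLinearMap) hM y hy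
      have hmemF : indVec n B'' ∈ polytope (𝓜 a₀) ∩ ⋂ b ∈ A.erase a₀, polytope (𝓜 b) := by
        rw [hl]
        exact ⟨indVec_mem_polytope h1, hmax⟩
      rw [mem_interMatroid]
      refine ⟨pieces_bases_subset hsub a₀ h1, fun a ha => ?_⟩
      by_cases haa₀ : a = a₀
      · rw [haa₀]; exact hmemF.1
      · exact Set.mem_iInter₂.mp hmemF.2 a (Finset.mem_erase.mpr ⟨haa₀, ha⟩)

lemma keyC (hsub : IsMatroidSubdivision 𝓑 𝓜)
    {C : Fin n → Finset (Fin n)} (hcard : ∀ i : Fin n, (C i).card = (i:ℕ)+1)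
    (hmono : ∀ i j, i ≤ j → C i ⊆ C j) :
    ∑ A : Finset (Fin m), (-1:ℤ)^A.card •
      (if interMatroid 𝓑 𝓜 A = ∅ then (0 : FreeAbelianGroup (Fin n → Finset (Fin n) × ℕ))
       else FreeAbelianGroup.of fun i => (C i, mrank (interMatroid 𝓑 𝓜 A) (C i))) = 0 := by
  classical
  have hβex : ∀ A : Finset (Fin m), ∃ B₀, (interMatroid 𝓑 𝓜 A).Nonempty →
      B₀ ∈ interMatroid 𝓑 𝓜 A ∧ ∀ B' ∈ interMatroid 𝓑 𝓜 A, wpsum C B' ≤ wpsum C B₀ := by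
    intro A
    rcases (interMatroid 𝓑 𝓜 A).eq_empty_or_nonempty with he | hne
    · exact ⟨∅, fun hc => absurd he (Finset.nonempty_iff_ne_empty.mp hc)⟩
    · obtain ⟨B₀, h1, h2⟩ := Finset.exists_max_image _ (wpsum C) hne
      exact ⟨B₀, fun _ => ⟨h1, h2⟩⟩
  choose β hβ using hβex
  have hrank : ∀ A : Finset (Fin m), (interMatroid 𝓑 𝓜 A).Nonempty → ∀ j : Fin n,
      mrank (interMatroid 𝓑 𝓜 A) (C j) = (C j ∩ β A).card := by
    intro A hne j
    obtain ⟨hβmem, hβmax⟩ := hβ A hne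
    obtain ⟨M, lam, hM, hchar⟩ := interMatroid_char hsub A hne
    apply le_antisymm
    · apply Finset.sup_le
      intro B' hB'
      obtain ⟨hB'M, hB'max⟩ := (hchar B').mp hB'
      obtain ⟨hβM, hβmax'⟩ := (hchar (β A)).mp hβmem
      exact lemmaH hM hcard hmono lam hβM hβmax'
        (fun B₂ hB₂ h => hβmax B₂ ((hchar B₂).mpr ⟨hB₂, h⟩)) hB'M hB'max j
    · exact Finset.le_sup (f := fun B => (C j ∩ B).card) hβmem
  have hsummand : ∀ A : Finset (Fin m),
      (if interMatroid 𝓑 𝓜 A = ∅ then (0 : FreeAbelianGroup (Fin n → Finset (Fin n) × ℕ))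
       else FreeAbelianGroup.of fun i => (C i, mrank (interMatroid 𝓑 𝓜 A) (C i)))
      = ∑ B' ∈ 𝓑, (if ((interMatroid 𝓑 𝓜 A).Nonempty ∧ β A = B')
          then FreeAbelianGroup.of (fun i => (C i, (C i ∩ B').card)) else 0) := by
    intro A
    rcases (interMatroid 𝓑 𝓜 A).eq_empty_or_nonempty with he | hne
    · rw [if_pos he, eq_comm]
      apply Finset.sum_eq_zero
      intro B' _
      rw [if_neg]
      rintro ⟨hc, _⟩
      rw [he] at hc
      exact Finset.not_nonempty_empty hc
    · rw [if_neg (Finset.nonempty_iff_ne_empty.mp hne)]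
      obtain ⟨hβmem, _⟩ := hβ A hne
      have hβ𝓑 : β A ∈ 𝓑 := (mem_interMatroid.mp hβmem).1
      have h1 : ∀ B' ∈ 𝓑, (if ((interMatroid 𝓑 𝓜 A).Nonempty ∧ β A = B')
          then FreeAbelianGroup.of (fun i => (C i, (C i ∩ B').card)) else 0)
          = (if β A = B' then FreeAbelianGroup.of (fun i => (C i, (C i ∩ B').card)) else 0) := by
        intro B' _
        by_cases h : β A = B'
        · rw [if_pos ⟨hne, h⟩, if_pos h]
        · rw [if_neg (fun hc => h hc.2), if_neg h]
      rw [Finset.sum_congr rfl h1,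
        Finset.sum_ite_eq 𝓑 (β A) (fun B' => FreeAbelianGroup.of (fun i => (C i, (C i ∩ B').card))),
        if_pos hβ𝓑]
      congr 1
      funext i
      rw [hrank A hne i]
  calc ∑ A : Finset (Fin m), (-1:ℤ)^A.card •
      (if interMatroid 𝓑 𝓜 A = ∅ then (0 : FreeAbelianGroup (Fin n → Finset (Fin n) × ℕ))
       else FreeAbelianGroup.of fun i => (C i, mrank (interMatroid 𝓑 𝓜 A) (C i)))
      = ∑ A : Finset (Fin m), ∑ B' ∈ 𝓑, (-1:ℤ)^A.card •
        (if ((interMatroid 𝓑 𝓜 A).Nonempty ∧ β A = B')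
          then FreeAbelianGroup.of (fun i => (C i, (C i ∩ B').card)) else 0) := by
        apply Finset.sum_congr rfl
        intro A _
        rw [hsummand A, Finset.smul_sum]
    _ = ∑ B' ∈ 𝓑, ∑ A : Finset (Fin m), (-1:ℤ)^A.card •
        (if ((interMatroid 𝓑 𝓜 A).Nonempty ∧ β A = B')
          then FreeAbelianGroup.of (fun i => (C i, (C i ∩ B').card)) else 0) := Finset.sum_comm
    _ = 0 := by
        apply Finset.sum_eq_zero
        intro B' hB'𝓑
        have hterm : ∀ A : Finset (Fin m), (-1:ℤ)^A.card •
            (if ((interMatroid 𝓑 𝓜 A).Nonempty ∧ β A = B')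
              then FreeAbelianGroup.of (fun i => (C i, (C i ∩ B').card)) else 0)
            = ((-1:ℤ)^A.card * ind ((interMatroid 𝓑 𝓜 A).Nonempty ∧ β A = B')) •
              FreeAbelianGroup.of (fun i => (C i, (C i ∩ B').card)) := by
          intro A
          by_cases h : ((interMatroid 𝓑 𝓜 A).Nonempty ∧ β A = B')
          · rw [if_pos h, ind_pos h, mul_one]
          · rw [if_neg h, ind_neg h, mul_zero, zero_smul, smul_zero]
        rw [Finset.sum_congr rfl (fun A _ => hterm A), ← Finset.sum_smul]
        have hE : ∑ A : Finset (Fin m),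
            (-1:ℤ)^A.card * ind ((interMatroid 𝓑 𝓜 A).Nonempty ∧ β A = B') = 0 := by
          have hTne : (univ.filter (fun a : Fin m => B' ∈ 𝓜 a)).Nonempty := by
            obtain ⟨a, ha⟩ := cover_bases hsub hB'𝓑
            exact ⟨a, Finset.mem_filter.mpr ⟨Finset.mem_univ _, ha⟩⟩
          have hcond : ∀ A : Finset (Fin m), ((interMatroid 𝓑 𝓜 A).Nonempty ∧ β A = B')
              ↔ (A ⊆ univ.filter (fun a : Fin m => B' ∈ 𝓜 a) ∧
                 ¬∃ B'' ∈ interMatroid 𝓑 𝓜 A, wpsum C B' < wpsum C B'') := by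
            intro A
            constructor
            · rintro ⟨hne, rfl⟩
              obtain ⟨hβmem, hβmax⟩ := hβ A hne
              obtain ⟨hβ𝓑2, hβPs⟩ := mem_interMatroid.mp hβmem
              constructor
              · intro a ha
                exact Finset.mem_filter.mpr
                  ⟨Finset.mem_univ _, mem_polytope_iff.mp (hβPs a ha)⟩
              · rintro ⟨B'', hB'', hlt⟩
                exact absurd (hβmax B'' hB'') (not_le.mpr hlt)
            · rintro ⟨hAT, hnot⟩
              have hB'N : B' ∈ interMatroid 𝓑 𝓜 A := mem_interMatroid.mpr
                ⟨hB'𝓑, fun a ha =>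
                  indVec_mem_polytope ((Finset.mem_filter.mp (hAT ha)).2)⟩
              have hne : (interMatroid 𝓑 𝓜 A).Nonempty := ⟨B', hB'N⟩
              refine ⟨hne, ?_⟩
              obtain ⟨hβmem, hβmax⟩ := hβ A hne
              have h1 : wpsum C B' ≤ wpsum C (β A) := hβmax B' hB'N
              have h2 : ¬ (wpsum C B' < wpsum C (β A)) := fun hc => hnot ⟨β A, hβmem, hc⟩
              exact wpsum_inj hcard hmono (le_antisymm (not_lt.mp h2) h1)
          have hvan : ∀ A ∈ (univ : Finset (Finset (Fin m))),
              A ∉ (univ.filter (fun a : Fin m => B' ∈ 𝓜 a)).powerset →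
              (-1:ℤ)^A.card * ind ((interMatroid 𝓑 𝓜 A).Nonempty ∧ β A = B') = 0 := by
            intro A _ hA
            rw [ind_neg, mul_zero]
            intro hc
            exact hA (Finset.mem_powerset.mpr ((hcond A).mp hc).1)
          rw [← Finset.sum_subset (Finset.subset_univ _) hvan]
          calc ∑ A ∈ (univ.filter (fun a : Fin m => B' ∈ 𝓜 a)).powerset,
              (-1:ℤ)^A.card * ind ((interMatroid 𝓑 𝓜 A).Nonempty ∧ β A = B')
              = ∑ A ∈ (univ.filter (fun a : Fin m => B' ∈ 𝓜 a)).powerset,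
                ((-1:ℤ)^A.card - (-1:ℤ)^A.card *
                  ind (∃ B'' ∈ interMatroid 𝓑 𝓜 A, wpsum C B' < wpsum C B'')) := by
                apply Finset.sum_congr rfl
                intro A hA
                rw [ind_congr (hcond A)]
                by_cases hImp : ∃ B'' ∈ interMatroid 𝓑 𝓜 A, wpsum C B' < wpsum C B''
                · rw [ind_neg (fun hc => hc.2 hImp), ind_pos hImp]
                  ring
                · rw [ind_pos ⟨Finset.mem_powerset.mp hA, hImp⟩, ind_neg hImp]
                  ring
            _ = (∑ A ∈ (univ.filter (fun a : Fin m => B' ∈ 𝓜 a)).powerset, (-1:ℤ)^A.card) -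
                ∑ A ∈ (univ.filter (fun a : Fin m => B' ∈ 𝓜 a)).powerset,
                  (-1:ℤ)^A.card * ind (∃ B'' ∈ interMatroid 𝓑 𝓜 A, wpsum C B' < wpsum C B'') :=
                by rw [Finset.sum_sub_distrib]
            _ = 0 := by
                rw [Finset.sum_powerset_neg_one_pow_card_of_nonempty hTne,
                  geom hsub C hB'𝓑 hTne]
                ring
        rw [hE, zero_smul]

lemma flagH_eq (𝓝 : Finset (Finset (Fin n))) : flagH 𝓝 =
    ∑ C ∈ Finset.univ.filter (fun C : Fin n → Finset (Fin n) =>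
        (∀ i, (C i).card = (i : ℕ) + 1) ∧ ∀ i j, i ≤ j → C i ⊆ C j),
      (if 𝓝 = ∅ then (0 : FreeAbelianGroup (Fin n → Finset (Fin n) × ℕ))
       else FreeAbelianGroup.of fun i => (C i, mrank 𝓝 (C i))) := by
  classical
  unfold flagH
  rw [Finset.filter_congr_decidable]
  by_cases h : 𝓝 = ∅
  · rw [if_pos h, eq_comm]
    exact Finset.sum_eq_zero (fun C _ => if_pos h)
  · rw [if_neg h]
    exact Finset.sum_congr rfl (fun C _ => (if_neg h).symm)


end Proof19

/-- The maximal-flag subset-rank function `H` is a valuation under matroid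
subdivisions. -/
theorem statement_19 (n : ℕ) :
    IsValuation fun 𝓑 : Finset (Finset (Fin n)) => flagH 𝓑 := by
  intro m 𝓑 𝓜 hsub
  classical
  show ∑ A : Finset (Fin m), (-1:ℤ) ^ A.card • flagH (interMatroid 𝓑 𝓜 A) = 0
  have hstep : ∀ A : Finset (Fin m), flagH (interMatroid 𝓑 𝓜 A)
      = ∑ C ∈ Finset.univ.filter (fun C : Fin n → Finset (Fin n) =>
          (∀ i, (C i).card = (i : ℕ) + 1) ∧ ∀ i j, i ≤ j → C i ⊆ C j),
        (if interMatroid 𝓑 𝓜 A = ∅ then (0 : FreeAbelianGroup (Fin n → Finset (Fin n) × ℕ))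
         else FreeAbelianGroup.of fun i => (C i, mrank (interMatroid 𝓑 𝓜 A) (C i))) :=
    fun A => Proof19.flagH_eq _
  rw [Finset.sum_congr rfl (fun A _ => by rw [hstep A, Finset.smul_sum])]
  rw [Finset.sum_comm]
  apply Finset.sum_eq_zero
  intro C hC
  exact Proof19.keyC hsub (Finset.mem_filter.mp hC).2.1 (Finset.mem_filter.mp hC).2.2
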